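/- arXiv:1603.00803 — 8 statements merged into one kernel-verified Lean document; each statement's English description precedes it below -/
import Mathlib

section
/- Let n be a real Lie algebra that is uniform of type (p,q,r) with degree s with respect to a uniform basis B = {v_1,…,v_q} ∪ {z_1,…,z_p}. For each l ∈ {1,…,p}, let J_l ∈ M_q(ℝ) be the q×q real matrix whose (i,j) entry is 1 if [v_j,v_i] = z_l, is −1 if [v_j,v_i] = −z_l, and is 0 otherwise. Then the matrices J_1,…,J_p are pairwise orthogonal with respect to the Frobenius inner product, i.e., trace(J_k · J_lᵀ) = 0 whenever k ≠ l; moreover for every l, trace(J_l · J_lᵀ) = 2r and trace(J_l²) = −2r. -/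
/-- A real Lie algebra `n` is *uniform of type `(p,q,r)` with degree `s`* with respect to the
families `v : Fin q → n` (generators) and `z : Fin p → n` (central vectors), which together
form the uniform basis.  The five conditions are exactly those of the definition of a uniform
Lie algebra:  (1) brackets with the `z`'s vanish; (2) every bracket `⁅v i, v j⁆` is `0` or
`± z k` for some `k`; (3) if `⁅v i, v j⁆ ≠ 0` and `⁅v i, v j⁆ = ± ⁅v i, v k⁆` then `j = k`;
(4) for each `l` there are exactly `r` (unordered) pairs `{i,j}` with `⁅v i, v j⁆ = z l`,
i.e. exactly `r` ordered pairs `(i,j)` with `⁅v i, v j⁆ = z l`; (5) for each `j` there are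
exactly `s` indices `i` with `⁅v i, v j⁆ ≠ 0`. -/
def IsUniform (p q r s : ℕ) {n : Type*} [LieRing n] [LieAlgebra ℝ n]
    (v : Fin q → n) (z : Fin p → n) : Prop :=
  (∀ i j, ⁅v i, z j⁆ = 0) ∧
  (∀ l m, ⁅z l, z m⁆ = 0) ∧
  (∀ i j, ⁅v i, v j⁆ = 0 ∨ ∃ k, ⁅v i, v j⁆ = z k ∨ ⁅v i, v j⁆ = - z k) ∧
  (∀ i j k, ⁅v i, v j⁆ ≠ 0 →
      (⁅v i, v j⁆ = ⁅v i, v k⁆ ∨ ⁅v i, v j⁆ = - ⁅v i, v k⁆) → j = k) ∧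
  (∀ l, {ij : Fin q × Fin q | ⁅v ij.1, v ij.2⁆ = z l}.ncard = r) ∧
  (∀ j, {i : Fin q | ⁅v i, v j⁆ ≠ 0}.ncard = s)

open Classical Matrix

/-- The matrices `J_1, …, J_p` are pairwise orthogonal with respect to the Frobenius inner
product `⟨A,B⟩ = trace (A * Bᵀ)`; moreover `trace (J l * (J l)ᵀ) = 2r` and
`trace (J l * J l) = -2r` for every `l`. -/
theorem uniform_J_frobenius {p q r s : ℕ}
    (hp : 0 < p) (hq : 0 < q) (hr : 0 < r) (hs : 0 < s)
    {n : Type*} [LieRing n] [LieAlgebra ℝ n] (B : Module.Basis (Fin q ⊕ Fin p) ℝ n)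
    (hB : IsUniform p q r s (fun i => B (Sum.inl i)) (fun k => B (Sum.inr k))) :
    let J : Fin p → Matrix (Fin q) (Fin q) ℝ := fun l i j =>
      if ⁅B (Sum.inl j), B (Sum.inl i)⁆ = B (Sum.inr l) then 1
      else if ⁅B (Sum.inl j), B (Sum.inl i)⁆ = - B (Sum.inr l) then -1
      else 0
    (∀ k l, k ≠ l → Matrix.trace (J k * (J l)ᵀ) = 0) ∧
    (∀ l, Matrix.trace (J l * (J l)ᵀ) = (2 * r : ℝ)) ∧
    (∀ l, Matrix.trace (J l * J l) = - (2 * r : ℝ)) := by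
  intro J
  obtain ⟨h1, h2, h3, h4, h5, h6⟩ := hB
  simp only at h5
  -- basic facts about basis vectors
  have hz_ne : ∀ k l : Fin p, B (Sum.inr k) = B (Sum.inr l) → k = l := by
    intro k l h
    exact Sum.inr_injective (B.injective h)
  have hz_neg : ∀ k l : Fin p, B (Sum.inr k) ≠ - B (Sum.inr l) := by
    intro k l h
    have h' := congrArg (fun x => B.repr x (Sum.inr k)) h
    simp only [Module.Basis.repr_self, map_neg, Finsupp.coe_neg, Pi.neg_apply,
      Finsupp.single_apply] at h'
    by_cases hkl : l = k
    · subst hkl; norm_num at h'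
    · simp [hkl, Sum.inr.injEq] at h'
  have hskew : ∀ i j : Fin q, ⁅B (Sum.inl i), B (Sum.inl j)⁆ = -⁅B (Sum.inl j), B (Sum.inl i)⁆ :=
    fun i j => (lie_skew _ _).symm
  -- trace formulas
  have htr : ∀ A C : Matrix (Fin q) (Fin q) ℝ,
      Matrix.trace (A * Cᵀ) = ∑ ij : Fin q × Fin q, A ij.1 ij.2 * C ij.1 ij.2 := by
    intro A C
    simp [Matrix.trace, Matrix.mul_apply, Matrix.diag, Fintype.sum_prod_type,
      Matrix.transpose_apply]
  have htr2 : ∀ A : Matrix (Fin q) (Fin q) ℝ,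
      Matrix.trace (A * A) = ∑ ij : Fin q × Fin q, A ij.1 ij.2 * A ij.2 ij.1 := by
    intro A
    simp [Matrix.trace, Matrix.mul_apply, Matrix.diag, Fintype.sum_prod_type]
  -- counting
  have hfilter : ∀ l : Fin p,
      (Finset.univ.filter
        (fun ij : Fin q × Fin q => ⁅B (Sum.inl ij.1), B (Sum.inl ij.2)⁆ = B (Sum.inr l))).card
        = r := by
    intro l
    have h := h5 l
    rwa [Set.ncard_eq_toFinset_card', Set.toFinset_setOf] at h
  have hA : ∀ l : Fin p,
      (Finset.univ.filter
        (fun ij : Fin q × Fin q => ⁅B (Sum.inl ij.2), B (Sum.inl ij.1)⁆ = B (Sum.inr l))).card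
        = r := by
    intro l
    rw [← hfilter l]
    apply Finset.card_equiv (Equiv.prodComm _ _)
    intro ij
    simp
  have hA' : ∀ l : Fin p,
      (Finset.univ.filter
        (fun ij : Fin q × Fin q => ⁅B (Sum.inl ij.2), B (Sum.inl ij.1)⁆ = - B (Sum.inr l))).card
        = r := by
    intro l
    rw [← hfilter l]
    apply Finset.card_equiv (Equiv.refl _)
    intro ij
    simp only [Finset.mem_filter, Finset.mem_univ, true_and, Equiv.refl_apply]
    rw [hskew ij.2 ij.1, neg_inj]
  -- claim 2
  have key2 : ∀ l, Matrix.trace (J l * (J l)ᵀ) = (2 * r : ℝ) := by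
    intro l
    rw [htr]
    have hpt : ∀ ij : Fin q × Fin q, J l ij.1 ij.2 * J l ij.1 ij.2 =
        (if ⁅B (Sum.inl ij.2), B (Sum.inl ij.1)⁆ = B (Sum.inr l) then (1:ℝ) else 0) +
        (if ⁅B (Sum.inl ij.2), B (Sum.inl ij.1)⁆ = - B (Sum.inr l) then (1:ℝ) else 0) := by
      intro ij
      simp only [J]
      split_ifs with ha hb
      · exact absurd (ha.symm.trans hb) (hz_neg l l)
      · norm_num
      · norm_num
      · norm_num
    rw [Finset.sum_congr rfl (fun ij _ => hpt ij), Finset.sum_add_distrib,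
      Finset.sum_boole, Finset.sum_boole, hA l, hA' l]
    push_cast
    ring
  refine ⟨?_, key2, ?_⟩
  · -- claim 1
    intro k l hkl
    rw [htr]
    apply Finset.sum_eq_zero
    intro ij _
    simp only [J]
    by_cases hb1 : ⁅B (Sum.inl ij.2), B (Sum.inl ij.1)⁆ = B (Sum.inr l)
    · have e1 : ⁅B (Sum.inl ij.2), B (Sum.inl ij.1)⁆ ≠ B (Sum.inr k) :=
        fun h => hkl (hz_ne k l (h.symm.trans hb1))
      have e2 : ⁅B (Sum.inl ij.2), B (Sum.inl ij.1)⁆ ≠ - B (Sum.inr k) :=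
        fun h => hz_neg l k (hb1.symm.trans h)
      simp [e1, e2]
    · by_cases hb2 : ⁅B (Sum.inl ij.2), B (Sum.inl ij.1)⁆ = - B (Sum.inr l)
      · have e1 : ⁅B (Sum.inl ij.2), B (Sum.inl ij.1)⁆ ≠ B (Sum.inr k) :=
          fun h => hz_neg k l (h.symm.trans hb2)
        have e2 : ⁅B (Sum.inl ij.2), B (Sum.inl ij.1)⁆ ≠ - B (Sum.inr k) :=
          fun h => hkl (hz_ne k l (neg_injective (h.symm.trans hb2)))
        simp [e1, e2]
      · simp [hb1, hb2]
  · -- claim 3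
    intro l
    rw [htr2]
    have hpt : ∀ ij : Fin q × Fin q, J l ij.1 ij.2 * J l ij.2 ij.1 =
        -(J l ij.1 ij.2 * J l ij.1 ij.2) := by
      rintro ⟨i, j⟩
      simp only [J]
      by_cases ha : ⁅B (Sum.inl j), B (Sum.inl i)⁆ = B (Sum.inr l)
      · have e1 : ⁅B (Sum.inl i), B (Sum.inl j)⁆ = - B (Sum.inr l) := by
          rw [hskew i j, ha]
        have e2 : ⁅B (Sum.inl i), B (Sum.inl j)⁆ ≠ B (Sum.inr l) := by
          rw [e1]
          exact fun h => hz_neg l l h.symm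
        have hnn : (- B (Sum.inr l) = B (Sum.inr l)) = False := by
          simp only [eq_iff_iff, iff_false]
          exact fun h => hz_neg l l h.symm
        simp [ha, e1, e2, hnn]
      · by_cases hb : ⁅B (Sum.inl j), B (Sum.inl i)⁆ = - B (Sum.inr l)
        · have e1 : ⁅B (Sum.inl i), B (Sum.inl j)⁆ = B (Sum.inr l) := by
            rw [hskew i j, hb, neg_neg]
          have hnn : (- B (Sum.inr l) = B (Sum.inr l)) = False := by
            simp only [eq_iff_iff, iff_false]
            exact fun h => hz_neg l l h.symm
          simp [ha, hb, e1, hnn]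
        · have e1 : ⁅B (Sum.inl i), B (Sum.inl j)⁆ ≠ B (Sum.inr l) := fun h =>
            hb (by rw [hskew j i, h])
          have e2 : ⁅B (Sum.inl i), B (Sum.inl j)⁆ ≠ - B (Sum.inr l) := fun h =>
            ha (by rw [hskew j i, h, neg_neg])
          simp [ha, hb, e1, e2]
    rw [Finset.sum_congr rfl (fun ij _ => hpt ij), Finset.sum_neg_distrib,
      ← htr (J l) (J l), key2 l]
end

section
/- Let n₁ be a real Lie algebra that is uniform of type (p₁,q₁,r₁) with respect to some uniform basis, and let n₂ be a real Lie algebra that is uniform of type (p₂,q₂,r₂) with respect to some uniform basis. If n₁ and n₂ are isomorphic as Lie algebras, then p₁ = p₂ and q₁ = q₂. -/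
/-- The center of a Lie algebra, as a submodule. -/
def lieCtr (n : Type*) [LieRing n] [LieAlgebra ℝ n] : Submodule ℝ n where
  carrier := {x | ∀ y : n, ⁅x, y⁆ = 0}
  add_mem' := fun ha hb y => by rw [add_lie, ha y, hb y, add_zero]
  zero_mem' := fun y => zero_lie y
  smul_mem' := fun c x hx y => by rw [smul_lie, hx y, smul_zero]

lemma mem_lieCtr {n : Type*} [LieRing n] [LieAlgebra ℝ n] {x : n} :
    x ∈ lieCtr n ↔ ∀ y : n, ⁅x, y⁆ = 0 := Iff.rfl

lemma lieCtr_eq_span {p q r s : ℕ} (hs : 0 < s)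
    {n : Type*} [LieRing n] [LieAlgebra ℝ n]
    (B : Module.Basis (Fin q ⊕ Fin p) ℝ n)
    (hB : IsUniform p q r s (fun i => B (Sum.inl i)) (fun k => B (Sum.inr k))) :
    lieCtr n = Submodule.span ℝ (Set.range fun k : Fin p => B (Sum.inr k)) := by
  obtain ⟨h1, h2, h3, h4, h5, h6⟩ := hB
  simp only [] at h1 h2 h3 h4 h5 h6
  have skew : ∀ a b : n, ⁅a, b⁆ = -⁅b, a⁆ := fun a b => (lie_skew a b).symm
  -- symmetric version of condition (3)
  have hsym : ∀ i i' j : Fin q, ⁅B (Sum.inl i'), B (Sum.inl j)⁆ ≠ 0 →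
      (⁅B (Sum.inl i'), B (Sum.inl j)⁆ = ⁅B (Sum.inl i), B (Sum.inl j)⁆ ∨
       ⁅B (Sum.inl i'), B (Sum.inl j)⁆ = -⁅B (Sum.inl i), B (Sum.inl j)⁆) → i' = i := by
    intro i i' j hne heq
    refine h4 j i' i ?_ ?_
    · rw [skew]
      exact neg_ne_zero.mpr hne
    · rcases heq with h | h
      · left
        rw [skew (B (Sum.inl j)) (B (Sum.inl i')), skew (B (Sum.inl j)) (B (Sum.inl i)), h]
      · right
        rw [skew (B (Sum.inl j)) (B (Sum.inl i')), h, neg_neg, skew]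
  apply le_antisymm
  · -- center ⊆ span z
    intro x hx
    rw [mem_lieCtr] at hx
    have hcoeff : ∀ i : Fin q, B.repr x (Sum.inl i) = 0 := by
      intro i
      -- find j with ⁅v i, v j⁆ ≠ 0
      have hne : ({i' : Fin q | ⁅B (Sum.inl i'), B (Sum.inl i)⁆ ≠ 0}).Nonempty := by
        apply Set.nonempty_of_ncard_ne_zero
        rw [h6 i]; omega
      obtain ⟨j, hj⟩ := hne
      have hij : ⁅B (Sum.inl i), B (Sum.inl j)⁆ ≠ 0 := by
        rw [skew]
        exact neg_ne_zero.mpr hj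
      obtain ⟨k, hk⟩ := (h3 i j).resolve_left hij
      -- the linear map "bracket with v j"
      set w : n := B (Sum.inl j) with hw
      let L : n →ₗ[ℝ] n :=
        { toFun := fun a => ⁅a, w⁆
          map_add' := fun a b => add_lie a b w
          map_smul' := fun c a => smul_lie c a w }
      have hL : ∀ a : n, L a = ⁅a, w⁆ := fun a => rfl
      have hsum : ∑ u : Fin q ⊕ Fin p, B.repr x u • ⁅B u, w⁆ = 0 := by
        calc ∑ u : Fin q ⊕ Fin p, B.repr x u • ⁅B u, w⁆
            = L (∑ u : Fin q ⊕ Fin p, B.repr x u • B u) := by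
              rw [map_sum]
              exact Finset.sum_congr rfl fun u _ => (map_smul L _ _).symm
          _ = L x := by rw [B.sum_repr]
          _ = 0 := hx w
      have h0 : ∑ u : Fin q ⊕ Fin p,
          B.repr x u * B.repr ⁅B u, w⁆ (Sum.inr k) = 0 := by
        have := congrArg (fun y => B.repr y (Sum.inr k)) hsum
        simpa [map_sum, Finsupp.smul_apply] using this
      rw [Finset.sum_eq_single (Sum.inl i)] at h0
      · -- the single term: second factor is ±1
        rcases hk with hk | hk
        · rw [hk, B.repr_self] at h0
          simpa using h0
        · rw [hk] at h0
          simp only [map_neg, B.repr_self, Finsupp.neg_apply] at h0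
          simpa using h0
      · intro u _ hu
        rcases u with i' | k'
        · -- v-term with i' ≠ i
          rcases h3 i' j with h0' | ⟨k', hk'⟩
          · rw [h0']; simp
          · have hne' : ⁅B (Sum.inl i'), B (Sum.inl j)⁆ ≠ 0 := by
              rcases hk' with hk' | hk' <;> rw [hk'] <;> simp [B.ne_zero]
            have hkk : k' ≠ k := by
              intro hkk; subst hkk
              apply hu
              apply congrArg Sum.inl
              apply hsym i i' j hne'
              rcases hk' with hk' | hk' <;> rcases hk with hk2 | hk2 <;>
                rw [hk', hk2] <;> simp
            rcases hk' with hk' | hk' <;> rw [hk']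
            · rw [B.repr_self]
              simp [Finsupp.single_apply, hkk]
            · rw [map_neg, B.repr_self]
              simp [Finsupp.single_apply, hkk]
        · -- z-term
          have hz : ⁅B (Sum.inr k'), w⁆ = 0 := by
            rw [skew, h1 j k', neg_zero]
          rw [hz]; simp
      · intro h; exact absurd (Finset.mem_univ _) h
    -- now x is in the span
    rw [← B.sum_repr x, Fintype.sum_sum_type]
    apply Submodule.add_mem
    · apply Submodule.sum_mem
      intro i _
      rw [hcoeff i, zero_smul]
      exact Submodule.zero_mem _
    · apply Submodule.sum_mem
      intro k _
      exact Submodule.smul_mem _ _ (Submodule.subset_span ⟨k, rfl⟩)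
  · -- span z ⊆ center
    rw [Submodule.span_le]
    rintro _ ⟨k, rfl⟩
    intro y
    show ⁅B (Sum.inr k), y⁆ = 0
    have had : LieAlgebra.ad ℝ n (B (Sum.inr k)) = 0 := by
      apply B.ext
      rintro (i | m)
      · show ⁅B (Sum.inr k), B (Sum.inl i)⁆ = (0 : n →ₗ[ℝ] n) (B (Sum.inl i))
        rw [skew, h1 i k, neg_zero]
        simp
      · show ⁅B (Sum.inr k), B (Sum.inr m)⁆ = (0 : n →ₗ[ℝ] n) (B (Sum.inr m))
        rw [h2 k m]; simp
    have := congrFun (congrArg DFunLike.coe had) y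
    simpa [LieAlgebra.ad_apply] using this

lemma lieCtr_finrank {p q r s : ℕ} (hs : 0 < s)
    {n : Type*} [LieRing n] [LieAlgebra ℝ n]
    (B : Module.Basis (Fin q ⊕ Fin p) ℝ n)
    (hB : IsUniform p q r s (fun i => B (Sum.inl i)) (fun k => B (Sum.inr k))) :
    Module.finrank ℝ (lieCtr n) = p := by
  rw [lieCtr_eq_span hs B hB]
  have hli : LinearIndependent ℝ (fun k : Fin p => B (Sum.inr k)) :=
    B.linearIndependent.comp Sum.inr Sum.inr_injective
  rw [finrank_span_eq_card hli, Fintype.card_fin]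

lemma lieCtr_map {n₁ n₂ : Type*} [LieRing n₁] [LieAlgebra ℝ n₁] [LieRing n₂] [LieAlgebra ℝ n₂]
    (e : n₁ ≃ₗ⁅ℝ⁆ n₂) :
    (lieCtr n₁).map (e.toLinearEquiv : n₁ →ₗ[ℝ] n₂) = lieCtr n₂ := by
  ext x
  constructor
  · rintro ⟨w, hw, rfl⟩
    intro y
    show ⁅e.toLinearEquiv w, y⁆ = 0
    have h1 : e.toLinearEquiv w = e w := rfl
    rw [h1, show y = e (e.symm y) from (e.apply_symm_apply y).symm, ← LieEquiv.map_lie,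
      hw (e.symm y)]
    exact e.toLinearEquiv.map_zero
  · intro hx
    refine ⟨e.symm x, ?_, ?_⟩
    · intro y
      have h2 : e.symm x = e.symm.toLinearEquiv x := rfl
      rw [show y = e.symm (e y) from (e.symm_apply_apply y).symm, ← LieEquiv.map_lie,
        hx (e y)]
      exact e.symm.toLinearEquiv.map_zero
    · show e.toLinearEquiv (e.symm x) = x
      exact e.apply_symm_apply x

/-- If `n₁` is uniform of type `(p₁,q₁,r₁)` and `n₂` is uniform of type `(p₂,q₂,r₂)` and
`n₁ ≅ n₂` as Lie algebras, then `p₁ = p₂` and `q₁ = q₂`. -/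
theorem uniform_pq_invariant {p₁ q₁ r₁ s₁ p₂ q₂ r₂ s₂ : ℕ}
    (hp₁ : 0 < p₁) (hq₁ : 0 < q₁) (hr₁ : 0 < r₁) (hs₁ : 0 < s₁)
    (hp₂ : 0 < p₂) (hq₂ : 0 < q₂) (hr₂ : 0 < r₂) (hs₂ : 0 < s₂)
    {n₁ n₂ : Type*} [LieRing n₁] [LieAlgebra ℝ n₁] [LieRing n₂] [LieAlgebra ℝ n₂]
    (B₁ : Module.Basis (Fin q₁ ⊕ Fin p₁) ℝ n₁)
    (hB₁ : IsUniform p₁ q₁ r₁ s₁ (fun i => B₁ (Sum.inl i)) (fun k => B₁ (Sum.inr k)))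
    (B₂ : Module.Basis (Fin q₂ ⊕ Fin p₂) ℝ n₂)
    (hB₂ : IsUniform p₂ q₂ r₂ s₂ (fun i => B₂ (Sum.inl i)) (fun k => B₂ (Sum.inr k)))
    (e : n₁ ≃ₗ⁅ℝ⁆ n₂) :
    p₁ = p₂ ∧ q₁ = q₂ := by
  have hp : p₁ = p₂ := by
    rw [← lieCtr_finrank hs₁ B₁ hB₁, ← lieCtr_finrank hs₂ B₂ hB₂, ← lieCtr_map e,
      LinearEquiv.finrank_map_eq]
  have hd₁ : Module.finrank ℝ n₁ = q₁ + p₁ := by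
    rw [Module.finrank_eq_card_basis B₁]; simp
  have hd₂ : Module.finrank ℝ n₂ = q₂ + p₂ := by
    rw [Module.finrank_eq_card_basis B₂]; simp
  have hd : Module.finrank ℝ n₁ = Module.finrank ℝ n₂ := e.toLinearEquiv.finrank_eq
  refine ⟨hp, ?_⟩
  omega
end

section
/- Let n and m be real Lie algebras, where n is uniform of type (p,q,1) with respect to a uniform basis {v_1,…,v_q} ∪ {z_1,…,z_p} and m is uniform of type (p,q,1) with respect to a uniform basis {x_1,…,x_q} ∪ {w_1,…,w_p}. Write [v_i,v_j] = Σ_k α_{ij}^k z_k and [x_i,x_j] = Σ_k β_{ij}^k w_k, and suppose n and m are associates with respect to these bases, i.e., (α_{ij}^k)² = (β_{ij}^k)² for all i,j,k. Then n and m are isomorphic as Lie algebras. -/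
/-- If `n` and `m` are uniform of type `(p,q,1)` with respect to uniform bases `B` and `C`,
and they are associates with respect to these bases (their structure constants agree up to
sign), then `n` and `m` are isomorphic Lie algebras. -/
theorem uniform_r_one_associates_isomorphic {p q s₁ s₂ : ℕ}
    (hp : 0 < p) (hq : 0 < q) (hs₁ : 0 < s₁) (hs₂ : 0 < s₂)
    {n m : Type*} [LieRing n] [LieAlgebra ℝ n] [LieRing m] [LieAlgebra ℝ m]
    (B : Module.Basis (Fin q ⊕ Fin p) ℝ n)
    (hB : IsUniform p q 1 s₁ (fun i => B (Sum.inl i)) (fun k => B (Sum.inr k)))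
    (C : Module.Basis (Fin q ⊕ Fin p) ℝ m)
    (hC : IsUniform p q 1 s₂ (fun i => C (Sum.inl i)) (fun k => C (Sum.inr k)))
    (hassoc : ∀ (i j : Fin q ⊕ Fin p) (a : Fin q ⊕ Fin p),
      (B.repr ⁅B i, B j⁆ a) ^ 2 = (C.repr ⁅C i, C j⁆ a) ^ 2) :
    Nonempty (n ≃ₗ⁅ℝ⁆ m) := by
  obtain ⟨hB1, hB2, hB3, -, hB5, -⟩ := hB
  obtain ⟨hC1, hC2, -, -, -, -⟩ := hC
  simp only at hB1 hB2 hB3 hB5 hC1 hC2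
  -- if a bracket vanishes in n, the corresponding bracket vanishes in m
  have hzero : ∀ i j : Fin q, ⁅B (Sum.inl i), B (Sum.inl j)⁆ = 0 →
      ⁅C (Sum.inl i), C (Sum.inl j)⁆ = 0 := by
    intro i j h
    have hall : ∀ a, C.repr ⁅C (Sum.inl i), C (Sum.inl j)⁆ a = 0 := by
      intro a
      have h2 := hassoc (Sum.inl i) (Sum.inl j) a
      rw [h] at h2
      simp only [map_zero, Finsupp.zero_apply] at h2
      have h3 : C.repr ⁅C (Sum.inl i), C (Sum.inl j)⁆ a ^ 2 = 0 := by
        simpa using h2.symm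
      exact pow_eq_zero_iff two_ne_zero |>.mp h3
    have : C.repr ⁅C (Sum.inl i), C (Sum.inl j)⁆ = 0 := Finsupp.ext hall
    simpa using C.repr.injective (by simpa using this)
  -- if a bracket is `± z k` in n, the corresponding bracket in m is a multiple of `w k`
  have hscal : ∀ (i j : Fin q) (k : Fin p) (ε : ℝ),
      ⁅B (Sum.inl i), B (Sum.inl j)⁆ = ε • B (Sum.inr k) →
      ⁅C (Sum.inl i), C (Sum.inl j)⁆ =
        (C.repr ⁅C (Sum.inl i), C (Sum.inl j)⁆ (Sum.inr k)) • C (Sum.inr k) := by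
    intro i j k ε h
    apply C.repr.injective
    ext a
    rcases eq_or_ne a (Sum.inr k) with rfl | ha
    · simp [Module.Basis.repr_self]
    · have hka : Sum.inr k ≠ a := Ne.symm ha
      have h2 := hassoc (Sum.inl i) (Sum.inl j) a
      rw [h] at h2
      simp only [map_smul, Module.Basis.repr_self, Finsupp.smul_apply,
        Finsupp.single_apply, if_neg hka, smul_zero] at h2
      have hz : C.repr ⁅C (Sum.inl i), C (Sum.inl j)⁆ a = 0 :=
        pow_eq_zero_iff two_ne_zero |>.mp (by simpa using h2.symm)
      rw [hz, map_smul, Module.Basis.repr_self, Finsupp.smul_apply, Finsupp.single_apply,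
        if_neg hka, smul_zero]
  -- the unique pair producing each `z l`
  choose P hP using fun l => Set.ncard_eq_one.mp (hB5 l)
  have hPl : ∀ l, ⁅B (Sum.inl (P l).1), B (Sum.inl (P l).2)⁆ = B (Sum.inr l) := by
    intro l
    have : P l ∈ {ij : Fin q × Fin q |
        ⁅B (Sum.inl ij.1), B (Sum.inl ij.2)⁆ = B (Sum.inr l)} := by
      rw [hP l]; exact Set.mem_singleton _
    exact this
  set σ : Fin p → ℝ :=
    fun l => C.repr ⁅C (Sum.inl (P l).1), C (Sum.inl (P l).2)⁆ (Sum.inr l) with hσdef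
  have hσsq : ∀ l, σ l * σ l = 1 := by
    intro l
    have h2 := hassoc (Sum.inl (P l).1) (Sum.inl (P l).2) (Sum.inr l)
    rw [hPl l] at h2
    simp only [Module.Basis.repr_self, Finsupp.single_apply, if_pos rfl] at h2
    have : σ l ^ 2 = 1 := by simpa [hσdef] using h2.symm
    simpa [pow_two] using this
  -- transfers for each classification case
  have hpos : ∀ (i j : Fin q) (k : Fin p),
      ⁅B (Sum.inl i), B (Sum.inl j)⁆ = B (Sum.inr k) →
      ⁅C (Sum.inl i), C (Sum.inl j)⁆ = σ k • C (Sum.inr k) := by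
    intro i j k h
    have hmem : (i, j) ∈ {ij : Fin q × Fin q |
        ⁅B (Sum.inl ij.1), B (Sum.inl ij.2)⁆ = B (Sum.inr k)} := h
    rw [hP k] at hmem
    have hPij : P k = (i, j) := (Set.mem_singleton_iff.mp hmem).symm
    have := hscal i j k 1 (by simpa using h)
    rw [this]
    congr 1
    simp [hσdef, hPij]
  have hneg : ∀ (i j : Fin q) (k : Fin p),
      ⁅B (Sum.inl i), B (Sum.inl j)⁆ = - B (Sum.inr k) →
      ⁅C (Sum.inl i), C (Sum.inl j)⁆ = - (σ k • C (Sum.inr k)) := by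
    intro i j k h
    have h' : ⁅B (Sum.inl j), B (Sum.inl i)⁆ = B (Sum.inr k) := by
      rw [← lie_skew, h, neg_neg]
    have := hpos j i k h'
    rw [← lie_skew, this]
  -- the linear maps
  set g : Fin q ⊕ Fin p → m :=
    Sum.elim (fun i => C (Sum.inl i)) (fun l => σ l • C (Sum.inr l)) with hgdef
  set g' : Fin q ⊕ Fin p → n :=
    Sum.elim (fun i => B (Sum.inl i)) (fun l => σ l • B (Sum.inr l)) with hg'def
  set f : n →ₗ[ℝ] m := B.constr ℝ g with hfdef
  set f' : m →ₗ[ℝ] n := C.constr ℝ g' with hf'def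
  have hfB : ∀ a, f (B a) = g a := fun a => B.constr_basis ℝ g a
  have hf'C : ∀ a, f' (C a) = g' a := fun a => C.constr_basis ℝ g' a
  have hcomp1 : f'.comp f = LinearMap.id := by
    apply B.ext
    intro a
    rcases a with i | l
    · simp [hfB, hf'C, hgdef, hg'def]
    · simp only [LinearMap.comp_apply, LinearMap.id_apply, hfB, hgdef, Sum.elim_inr,
        map_smul, hf'C, hg'def]
      rw [smul_smul, hσsq l, one_smul]
  have hcomp2 : f.comp f' = LinearMap.id := by
    apply C.ext
    intro a
    rcases a with i | l
    · simp [hfB, hf'C, hgdef, hg'def]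
    · simp only [LinearMap.comp_apply, LinearMap.id_apply, hf'C, hg'def, Sum.elim_inr,
        map_smul, hfB, hgdef]
      rw [smul_smul, hσsq l, one_smul]
  -- bracket compatibility on basis vectors
  have key : ∀ a b : Fin q ⊕ Fin p, f ⁅B a, B b⁆ = ⁅f (B a), f (B b)⁆ := by
    intro a b
    rw [hfB, hfB]
    rcases a with i | l
    · rcases b with j | l
      · rcases hB3 i j with h | ⟨k, h | h⟩
        · rw [h, map_zero, hgdef]
          simp [hzero i j h]
        · rw [h, hfB, hgdef]
          simp only [Sum.elim_inl, Sum.elim_inr]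
          exact (hpos i j k h).symm
        · rw [h, map_neg, hfB, hgdef]
          simp only [Sum.elim_inl, Sum.elim_inr]
          exact (hneg i j k h).symm
      · rw [hB1 i l, map_zero, hgdef]
        simp [hC1 i l]
    · rcases b with j | l'
      · have hn : ⁅B (Sum.inr l), B (Sum.inl j)⁆ = 0 := by
          rw [← lie_skew, hB1 j l, neg_zero]
        have hm : ⁅(g (Sum.inr l) : m), g (Sum.inl j)⁆ = 0 := by
          rw [hgdef]
          simp only [Sum.elim_inl, Sum.elim_inr, smul_lie]
          rw [← lie_skew, hC1 j l, neg_zero, smul_zero]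
        rw [hn, map_zero, hm]
      · rw [hB2 l l', map_zero, hgdef]
        simp only [Sum.elim_inr, smul_lie, lie_smul]
        rw [hC2 l l', smul_zero, smul_zero]
  -- bracket compatibility everywhere, by bilinearity
  have hf : ∀ x y : n, f ⁅x, y⁆ = ⁅f x, f y⁆ := by
    let L1 : n →ₗ[ℝ] n →ₗ[ℝ] m := LinearMap.mk₂ ℝ (fun x y => f ⁅x, y⁆)
      (fun x x' y => by simp only [add_lie, map_add]) (fun c x y => by simp only [smul_lie, map_smul])
      (fun x y y' => by simp only [lie_add, map_add]) (fun c x y => by simp only [lie_smul, map_smul])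
    let L2 : n →ₗ[ℝ] n →ₗ[ℝ] m := LinearMap.mk₂ ℝ (fun x y => ⁅f x, f y⁆)
      (fun x x' y => by simp only [map_add, add_lie]) (fun c x y => by simp only [map_smul, smul_lie])
      (fun x y y' => by simp only [map_add, lie_add]) (fun c x y => by simp only [map_smul, lie_smul])
    have hL : L1 = L2 := B.ext fun a => B.ext fun b => key a b
    intro x y
    exact LinearMap.congr_fun (LinearMap.congr_fun hL x) y
  exact ⟨{ toLinearMap := f
           map_lie' := fun {x y} => hf x y
           invFun := f'
           left_inv := fun x => by
             have := LinearMap.congr_fun hcomp1 x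
             simpa using this
           right_inv := fun x => by
             have := LinearMap.congr_fun hcomp2 x
             simpa using this }⟩
end

section
/- Let n be a real Lie algebra that is uniform of type (p,q,r) with degree s with respect to some uniform basis. Then: (1) 2rp = sq; (2) s ≤ p and rp ≤ q(q−1)/2, so in particular s ≤ p ≤ rp = sq/2 ≤ q(q−1)/2; and (3) 2 ≤ 2r ≤ q. -/
/-- Constraints on the parameters of a uniform Lie algebra of type `(p,q,r)` with degree `s`:
`2rp = sq`, `s ≤ p ≤ rp = sq/2 ≤ q(q-1)/2`, and `2 ≤ 2r ≤ q`. -/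
theorem uniform_parameter_constraints {p q r s : ℕ}
    (hp : 0 < p) (hq : 0 < q) (hr : 0 < r) (hs : 0 < s)
    {n : Type*} [LieRing n] [LieAlgebra ℝ n] (B : Module.Basis (Fin q ⊕ Fin p) ℝ n)
    (hB : IsUniform p q r s (fun i => B (Sum.inl i)) (fun k => B (Sum.inr k))) :
    2 * r * p = s * q ∧
    s ≤ p ∧ p ≤ r * p ∧ r * p = s * q / 2 ∧ r * p ≤ q * (q - 1) / 2 ∧
    2 ≤ 2 * r ∧ 2 * r ≤ q := by
  classical
  set v : Fin q → n := fun i => B (Sum.inl i) with hv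
  set z : Fin p → n := fun k => B (Sum.inr k) with hz
  obtain ⟨h1, h2, h3, h4, h5, h6⟩ := hB
  -- basic facts about basis vectors
  have hz0 : ∀ l, z l ≠ 0 := fun l => B.ne_zero _
  have hzinj : ∀ k l : Fin p, z k = z l → k = l := by
    intro k l h
    have := B.injective h
    exact Sum.inr_injective this
  have hzne : ∀ k l : Fin p, z k ≠ - z l := by
    intro k l h
    have h2 := DFunLike.congr_fun (congrArg B.repr h) (Sum.inr k)
    rw [hz] at h2
    simp only [map_neg, Module.Basis.repr_self, Finsupp.single_apply, Finsupp.coe_neg, Pi.neg_apply]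
    at h2
    by_cases hkl : (Sum.inr k : Fin q ⊕ Fin p) = Sum.inr k
    · by_cases hlk : (Sum.inr l : Fin q ⊕ Fin p) = Sum.inr k <;>
        simp [hkl, hlk] at h2 <;> norm_num at h2
    · exact hkl rfl
  have huniq : ∀ (k l : Fin p) (b b' : Bool),
      (if b then z k else - z k) = (if b' then z l else - z l) → k = l ∧ b = b' := by
    intro k l b b' h
    cases b <;> cases b' <;> simp only [if_true, if_false, Bool.false_eq_true, ↓reduceIte] at h
    · exact ⟨hzinj k l (neg_inj.mp h), rfl⟩
    · exact absurd h.symm (hzne l k)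
    · exact absurd h (hzne k l)
    · exact ⟨hzinj k l h, rfl⟩
  -- the choice function picking out which ± z k a bracket equals
  have hex : ∀ x : Fin q × Fin q, ⁅v x.1, v x.2⁆ ≠ 0 →
      ∃ kb : Fin p × Bool, ⁅v x.1, v x.2⁆ = (if kb.2 then z kb.1 else - z kb.1) := by
    intro x hx
    rcases h3 x.1 x.2 with h | ⟨k, h | h⟩
    · exact absurd h hx
    · exact ⟨(k, true), by simpa using h⟩
    · exact ⟨(k, false), by simpa using h⟩
  let g : Fin q × Fin q → Fin p × Bool := fun x =>
    if h : ∃ kb : Fin p × Bool, ⁅v x.1, v x.2⁆ = (if kb.2 then z kb.1 else - z kb.1)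
    then h.choose else (⟨0, hp⟩, true)
  have hg_spec : ∀ x : Fin q × Fin q, ⁅v x.1, v x.2⁆ ≠ 0 →
      ⁅v x.1, v x.2⁆ = (if (g x).2 then z (g x).1 else - z (g x).1) := by
    intro x hx
    have h := hex x hx
    simp only [g, dif_pos h]
    exact h.choose_spec
  have hg_eq : ∀ (x : Fin q × Fin q) (l : Fin p) (b : Bool),
      ⁅v x.1, v x.2⁆ = (if b then z l else - z l) → ⁅v x.1, v x.2⁆ ≠ 0 → g x = (l, b) := by
    intro x l b hb hne
    have h2 := hg_spec x hne
    obtain ⟨e1, e2⟩ := huniq (g x).1 l (g x).2 b (h2.symm.trans hb)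
    exact Prod.ext e1 e2
  -- translate ncard hypotheses to Finset.card
  have h5' : ∀ l, (Finset.univ.filter
      (fun x : Fin q × Fin q => ⁅v x.1, v x.2⁆ = z l)).card = r := by
    intro l
    rw [← h5 l, Set.ncard_eq_toFinset_card', Set.toFinset_setOf]
  have h6' : ∀ j, (Finset.univ.filter (fun i : Fin q => ⁅v i, v j⁆ ≠ 0)).card = s := by
    intro j
    rw [← h6 j, Set.ncard_eq_toFinset_card', Set.toFinset_setOf]
  -- the set of nonvanishing ordered pairs
  set T : Finset (Fin q × Fin q) :=
    Finset.univ.filter (fun x : Fin q × Fin q => ⁅v x.1, v x.2⁆ ≠ 0) with hT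
  -- count T by the second coordinate
  have hT1 : T.card = s * q := by
    rw [Finset.card_eq_sum_card_fiberwise
      (f := Prod.snd) (t := Finset.univ) (fun x _ => Finset.mem_univ _)]
    have : ∀ j : Fin q, (T.filter (fun x => x.2 = j)).card = s := by
      intro j
      have himg : T.filter (fun x => x.2 = j) =
          (Finset.univ.filter (fun i : Fin q => ⁅v i, v j⁆ ≠ 0)).image (fun i => (i, j)) := by
        ext ⟨a, b⟩
        simp only [hT, Finset.mem_filter, Finset.mem_univ, true_and, Finset.mem_image]
        constructor
        · rintro ⟨hne, rfl⟩; exact ⟨a, hne, rfl⟩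
        · rintro ⟨i, hne, h⟩
          injection h with h1 h2; subst h1; subst h2; exact ⟨hne, rfl⟩
      rw [himg, Finset.card_image_of_injective _
        (fun a b h => by injection h), h6' j]
    simp [this, Finset.sum_const, mul_comm]
  -- count T by the value of g
  have hfibt : ∀ l, T.filter (fun x => g x = (l, true)) =
      Finset.univ.filter (fun x : Fin q × Fin q => ⁅v x.1, v x.2⁆ = z l) := by
    intro l
    ext x
    simp only [hT, Finset.mem_filter, Finset.mem_univ, true_and]
    constructor
    · rintro ⟨hne, hgx⟩
      have := hg_spec x hne
      rw [hgx] at this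
      simpa using this
    · intro h
      have hne : ⁅v x.1, v x.2⁆ ≠ 0 := by rw [h]; exact hz0 l
      exact ⟨hne, hg_eq x l true (by simpa using h) hne⟩
  have hfibf : ∀ l, T.filter (fun x => g x = (l, false)) =
      Finset.univ.filter (fun x : Fin q × Fin q => ⁅v x.1, v x.2⁆ = - z l) := by
    intro l
    ext x
    simp only [hT, Finset.mem_filter, Finset.mem_univ, true_and]
    constructor
    · rintro ⟨hne, hgx⟩
      have := hg_spec x hne
      rw [hgx] at this
      simpa using this
    · intro h
      have hne : ⁅v x.1, v x.2⁆ ≠ 0 := by rw [h]; exact neg_ne_zero.mpr (hz0 l)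
      exact ⟨hne, hg_eq x l false (by simpa using h) hne⟩
  have hcardneg : ∀ l, (Finset.univ.filter
      (fun x : Fin q × Fin q => ⁅v x.1, v x.2⁆ = - z l)).card = r := by
    intro l
    have himg : Finset.univ.filter (fun x : Fin q × Fin q => ⁅v x.1, v x.2⁆ = - z l) =
        (Finset.univ.filter (fun x : Fin q × Fin q => ⁅v x.1, v x.2⁆ = z l)).image Prod.swap := by
      ext ⟨a, b⟩
      simp only [Finset.mem_filter, Finset.mem_univ, true_and, Finset.mem_image, Prod.exists,
        Prod.swap_prod_mk, Prod.mk.injEq]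
      constructor
      · intro h
        refine ⟨b, a, ?_, rfl, rfl⟩
        rw [← lie_skew, h, neg_neg]
      · rintro ⟨c, d, h, rfl, rfl⟩
        rw [← lie_skew, h]
    rw [himg, Finset.card_image_of_injective _ Prod.swap_injective, h5' l]
  have hT2 : T.card = 2 * (r * p) := by
    rw [Finset.card_eq_sum_card_fiberwise
      (f := g) (t := Finset.univ) (fun x _ => Finset.mem_univ _)]
    have : ∀ kb : Fin p × Bool, (T.filter (fun x => g x = kb)).card = r := by
      rintro ⟨l, b⟩
      cases b
      · rw [hfibf l, hcardneg l]
      · rw [hfibt l, h5' l]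
    rw [Finset.sum_congr rfl (fun kb _ => this kb)]
    simp [Finset.sum_const, Finset.card_univ, mul_comm, mul_assoc, mul_left_comm]
  have key : s * q = 2 * (r * p) := hT1 ▸ hT2
  -- s ≤ q - 1
  have j0 : Fin q := ⟨0, hq⟩
  have hsq1 : s ≤ q - 1 := by
    rw [← h6' j0]
    have hsub : Finset.univ.filter (fun i : Fin q => ⁅v i, v j0⁆ ≠ 0) ⊆ {j0}ᶜ := by
      intro i hi
      simp only [Finset.mem_filter, Finset.mem_univ, true_and] at hi
      simp only [Finset.mem_compl, Finset.mem_singleton]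
      rintro rfl
      exact hi (lie_self _)
    calc (Finset.univ.filter (fun i : Fin q => ⁅v i, v j0⁆ ≠ 0)).card
        ≤ ({j0}ᶜ : Finset (Fin q)).card := Finset.card_le_card hsub
      _ = q - 1 := by rw [Finset.card_compl]; simp
  -- s ≤ p
  have hsp : s ≤ p := by
    rw [← h6' j0]
    have hinj : Set.InjOn (fun i => (g (j0, i)).1)
        ↑(Finset.univ.filter (fun i : Fin q => ⁅v i, v j0⁆ ≠ 0)) := by
      intro i1 hi1 i2 hi2 heq
      simp only [Finset.coe_filter, Set.mem_setOf_eq, Finset.mem_univ, true_and] at hi1 hi2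
      have hne1 : ⁅v j0, v i1⁆ ≠ 0 := by
        rw [← lie_skew]; exact neg_ne_zero.mpr hi1
      have hne2 : ⁅v j0, v i2⁆ ≠ 0 := by
        rw [← lie_skew]; exact neg_ne_zero.mpr hi2
      have e1 := hg_spec (j0, i1) hne1
      have e2 := hg_spec (j0, i2) hne2
      simp only at e1 e2 heq
      rw [heq] at e1
      apply h4 j0 i1 i2 hne1
      rcases Bool.eq_false_or_eq_true (g (j0, i1)).2 with hb1 | hb1 <;>
        rcases Bool.eq_false_or_eq_true (g (j0, i2)).2 with hb2 | hb2 <;>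
        rw [hb1] at e1 <;> rw [hb2] at e2 <;> simp at e1 e2
      · left; rw [e1, e2]
      · right; rw [e1, e2, neg_neg]
      · right; rw [e1, e2]
      · left; rw [e1, e2]
    calc (Finset.univ.filter (fun i : Fin q => ⁅v i, v j0⁆ ≠ 0)).card
        ≤ (Finset.univ : Finset (Fin p)).card :=
          Finset.card_le_card_of_injOn _ (fun _ _ => Finset.mem_univ _) hinj
      _ = p := by simp
  refine ⟨?_, hsp, ?_, ?_, ?_, ?_, ?_⟩
  · rw [mul_assoc]; exact key.symm
  · exact Nat.le_mul_of_pos_left p hr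
  · rw [key, Nat.mul_div_cancel_left _ two_pos]
  · rw [Nat.le_div_iff_mul_le two_pos]
    calc r * p * 2 = s * q := by rw [mul_comm (r * p) 2, ← key]
      _ ≤ (q - 1) * q := Nat.mul_le_mul_right q hsq1
      _ = q * (q - 1) := mul_comm _ _
  · omega
  · have h2rp : 2 * r * p ≤ q * p := by
      calc 2 * r * p = s * q := by rw [mul_assoc]; exact key.symm
        _ ≤ p * q := Nat.mul_le_mul_right q hsp
        _ = q * p := mul_comm _ _
    exact Nat.le_of_mul_le_mul_right h2rp hp
end

section
/- Let n be a real Lie algebra that is uniform of type (p,q,r) with degree s with respect to a uniform basis B = {v_1,…,v_q} ∪ {z_1,…,z_p}. Suppose φ is a permutation of {1,…,q} and σ is a permutation of {1,…,p} such that for all i, j ∈ {1,…,q} and all k ∈ {1,…,p}: [v_i,v_j] = z_k if and only if [v_{φ(i)},v_{φ(j)}] = z_{σ(k)}. Then the linear map φ̂ : n → n determined by φ̂(v_i) = v_{φ(i)} and φ̂(z_k) = z_{σ(k)} is a Lie algebra automorphism of n. Moreover, the assignment (φ,σ) ↦ φ̂ from the group of such pairs (a color-permuting automorphism of the associated colored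 directed graph) into the automorphism group of n is an injective group homomorphism. -/
/-- The linear map `φ̂` determined by `φ̂ (v i) = v (φ i)` and `φ̂ (z k) = z (σ k)`. -/
noncomputable def hatMap {p q : ℕ} {n : Type*} [LieRing n] [LieAlgebra ℝ n]
    (B : Module.Basis (Fin q ⊕ Fin p) ℝ n) (φ : Equiv.Perm (Fin q)) (σ : Equiv.Perm (Fin p)) :
    n →ₗ[ℝ] n :=
  B.constr ℝ (Sum.elim (fun i => B (Sum.inl (φ i))) (fun k => B (Sum.inr (σ k))))


section HatAux

variable {p q : ℕ} {n : Type*} [LieRing n] [LieAlgebra ℝ n]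

lemma hatMap_basis (B : Module.Basis (Fin q ⊕ Fin p) ℝ n) (φ : Equiv.Perm (Fin q))
    (σ : Equiv.Perm (Fin p)) (x : Fin q ⊕ Fin p) :
    hatMap B φ σ (B x) = B (Equiv.sumCongr φ σ x) := by
  cases x <;> simp [hatMap, Module.Basis.constr_basis]

lemma hatMap_comp' (B : Module.Basis (Fin q ⊕ Fin p) ℝ n) (φ₁ φ₂ : Equiv.Perm (Fin q))
    (σ₁ σ₂ : Equiv.Perm (Fin p)) :
    hatMap B (φ₁ * φ₂) (σ₁ * σ₂) = (hatMap B φ₁ σ₁) ∘ₗ (hatMap B φ₂ σ₂) := by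
  apply B.ext
  intro x
  simp [hatMap_basis]

lemma hatMap_one' (B : Module.Basis (Fin q ⊕ Fin p) ℝ n) :
    hatMap B 1 1 = LinearMap.id := by
  apply B.ext
  intro x
  simp [hatMap_basis]

/-- The Lie bracket as a bilinear map. -/
noncomputable def brkt : n →ₗ[ℝ] n →ₗ[ℝ] n where
  toFun x :=
    { toFun := fun y => ⁅x, y⁆
      map_add' := lie_add x
      map_smul' := fun c y => lie_smul c x y }
  map_add' x y := by ext z; simp [add_lie]
  map_smul' c x := by ext z; simp [smul_lie]

@[simp] lemma brkt_apply (x y : n) : brkt x y = ⁅x, y⁆ := rfl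

end HatAux

/-- A color-permuting automorphism `(φ,σ)` of the colored directed graph attached to a
uniform Lie algebra (i.e. `⁅v i, v j⁆ = z k ↔ ⁅v (φ i), v (φ j)⁆ = z (σ k)`) induces the
Lie-algebra automorphism `φ̂` of `n`; moreover the assignment `(φ,σ) ↦ φ̂` is an injective
group homomorphism from the group of color-permuting automorphisms into `Aut(n)`. -/
theorem uniform_colored_automorphism {p q r s : ℕ}
    (hp : 0 < p) (hq : 0 < q) (hr : 0 < r) (hs : 0 < s)
    {n : Type*} [LieRing n] [LieAlgebra ℝ n] (B : Module.Basis (Fin q ⊕ Fin p) ℝ n)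
    (hB : IsUniform p q r s (fun i => B (Sum.inl i)) (fun k => B (Sum.inr k))) :
    (∀ (φ : Equiv.Perm (Fin q)) (σ : Equiv.Perm (Fin p)),
      (∀ (i j : Fin q) (k : Fin p),
        ⁅B (Sum.inl i), B (Sum.inl j)⁆ = B (Sum.inr k) ↔
          ⁅B (Sum.inl (φ i)), B (Sum.inl (φ j))⁆ = B (Sum.inr (σ k))) →
      (∀ x y : n, hatMap B φ σ ⁅x, y⁆ = ⁅hatMap B φ σ x, hatMap B φ σ y⁆) ∧
      Function.Bijective (hatMap B φ σ)) ∧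
    (∀ (φ₁ φ₂ : Equiv.Perm (Fin q)) (σ₁ σ₂ : Equiv.Perm (Fin p)),
      (∀ (i j : Fin q) (k : Fin p),
        ⁅B (Sum.inl i), B (Sum.inl j)⁆ = B (Sum.inr k) ↔
          ⁅B (Sum.inl (φ₁ i)), B (Sum.inl (φ₁ j))⁆ = B (Sum.inr (σ₁ k))) →
      (∀ (i j : Fin q) (k : Fin p),
        ⁅B (Sum.inl i), B (Sum.inl j)⁆ = B (Sum.inr k) ↔
          ⁅B (Sum.inl (φ₂ i)), B (Sum.inl (φ₂ j))⁆ = B (Sum.inr (σ₂ k))) →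
      hatMap B (φ₁ * φ₂) (σ₁ * σ₂) = (hatMap B φ₁ σ₁) ∘ₗ (hatMap B φ₂ σ₂)) ∧
    (∀ (φ₁ φ₂ : Equiv.Perm (Fin q)) (σ₁ σ₂ : Equiv.Perm (Fin p)),
      hatMap B φ₁ σ₁ = hatMap B φ₂ σ₂ → φ₁ = φ₂ ∧ σ₁ = σ₂) := by

  obtain ⟨h1, h2, h3, h4, -, -⟩ := hB
  refine ⟨?_, ?_, ?_⟩
  · intro φ σ h
    have key : ∀ x y : Fin q ⊕ Fin p,
        hatMap B φ σ ⁅B x, B y⁆ = ⁅hatMap B φ σ (B x), hatMap B φ σ (B y)⁆ := by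
      rintro (i | k) (j | k')
      · -- inl, inl
        rw [hatMap_basis, hatMap_basis]
        simp only [Equiv.sumCongr_apply, Sum.map_inl]
        rcases h3 i j with h0 | ⟨k, hk | hk⟩
        · rw [h0, map_zero]
          rcases h3 (φ i) (φ j) with h0' | ⟨k', hk' | hk'⟩
          · exact h0'.symm
          · exfalso
            have h5 : ⁅B (Sum.inl (φ i)), B (Sum.inl (φ j))⁆ = B (Sum.inr (σ (σ⁻¹ k'))) := by
              rw [hk']; congr 1; simp
            have := (h i j (σ⁻¹ k')).mpr h5
            rw [h0] at this
            exact B.ne_zero _ this.symm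
          · exfalso
            have h5 : ⁅B (Sum.inl (φ j)), B (Sum.inl (φ i))⁆ = B (Sum.inr (σ (σ⁻¹ k'))) := by
              rw [← lie_skew, hk', neg_neg]; congr 1; simp
            have := (h j i (σ⁻¹ k')).mpr h5
            rw [← lie_skew, h0, neg_zero] at this
            exact B.ne_zero _ this.symm
        · rw [hk, hatMap_basis]
          simp only [Equiv.sumCongr_apply, Sum.map_inr]
          exact ((h i j k).mp hk).symm
        · rw [hk, map_neg, hatMap_basis]
          simp only [Equiv.sumCongr_apply, Sum.map_inr]
          have h5 : ⁅B (Sum.inl j), B (Sum.inl i)⁆ = B (Sum.inr k) := by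
            rw [← lie_skew, hk, neg_neg]
          have := (h j i k).mp h5
          rw [← lie_skew (B (Sum.inl (φ i))), this]
      · -- inl, inr
        rw [h1 i k', map_zero, hatMap_basis, hatMap_basis]
        simp only [Equiv.sumCongr_apply, Sum.map_inl, Sum.map_inr]
        exact (h1 (φ i) (σ k')).symm
      · -- inr, inl
        rw [← lie_skew, h1 j k, neg_zero, map_zero, hatMap_basis, hatMap_basis]
        simp only [Equiv.sumCongr_apply, Sum.map_inl, Sum.map_inr]
        rw [← lie_skew, h1 (φ j) (σ k), neg_zero]
      · -- inr, inr
        rw [h2 k k', map_zero, hatMap_basis, hatMap_basis]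
        simp only [Equiv.sumCongr_apply, Sum.map_inr]
        exact (h2 (σ k) (σ k')).symm
    constructor
    · have hext : brkt.compr₂ (hatMap B φ σ) =
          ((brkt : n →ₗ[ℝ] n →ₗ[ℝ] n) ∘ₗ hatMap B φ σ).compl₂ (hatMap B φ σ) := by
        apply LinearMap.ext_basis B B
        intro x y
        simpa using key x y
      intro x y
      simpa using DFunLike.congr_fun (DFunLike.congr_fun hext x) y
    · refine Function.bijective_iff_has_inverse.mpr ⟨hatMap B φ⁻¹ σ⁻¹, ?_, ?_⟩
      · intro x
        have := DFunLike.congr_fun (hatMap_comp' B φ⁻¹ φ σ⁻¹ σ) x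
        rw [inv_mul_cancel, inv_mul_cancel, hatMap_one'] at this
        exact this.symm
      · intro x
        have := DFunLike.congr_fun (hatMap_comp' B φ φ⁻¹ σ σ⁻¹) x
        rw [mul_inv_cancel, mul_inv_cancel, hatMap_one'] at this
        exact this.symm
  · intro φ₁ φ₂ σ₁ σ₂ _ _
    exact hatMap_comp' B φ₁ φ₂ σ₁ σ₂
  · intro φ₁ φ₂ σ₁ σ₂ hEq
    constructor
    · ext i
      have := DFunLike.congr_fun hEq (B (Sum.inl i))
      rw [hatMap_basis, hatMap_basis] at this
      exact congrArg Fin.val (Sum.inl.inj (B.injective this))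
    · ext k
      have := DFunLike.congr_fun hEq (B (Sum.inr k))
      rw [hatMap_basis, hatMap_basis] at this
      exact congrArg Fin.val (Sum.inr.inj (B.injective this))
end

section
/- Let n₁ be a real Lie algebra that is uniform of type (p₁,q₁,r₁) with degree s₁ with respect to a uniform basis B₁, and let n₂ be a real Lie algebra that is uniform of type (p₂,q₂,r₂) with degree s₂ with respect to a uniform basis B₂. Let n = n₁ ⊕ n₂ be the direct sum Lie algebra and let B be the union of the images of B₁ and B₂ under the natural inclusions i₁ : n₁ → n₁ ⊕ n₂ and i₂ : n₂ → n₁ ⊕ n₂. Then B is a uniform basis for n if and only if r₁ = r₂ and s₁ = s₂; and in that case n is uniform of type (p₁ + p₂, q₁ + q₂, r₁) with degree s₁ with respect to B. -/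
/-- The componentwise Lie ring structure on the product of two Lie rings. -/
instance prodLieRing {L M : Type*} [LieRing L] [LieRing M] : LieRing (L × M) where
  bracket x y := (⁅x.1, y.1⁆, ⁅x.2, y.2⁆)
  add_lie x y z := Prod.ext (add_lie x.1 y.1 z.1) (add_lie x.2 y.2 z.2)
  lie_add x y z := Prod.ext (lie_add x.1 y.1 z.1) (lie_add x.2 y.2 z.2)
  lie_self x := Prod.ext (lie_self x.1) (lie_self x.2)
  leibniz_lie x y z := Prod.ext (leibniz_lie x.1 y.1 z.1) (leibniz_lie x.2 y.2 z.2)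

/-- The componentwise real Lie algebra structure on the product (the direct sum `n₁ ⊕ n₂`). -/
instance prodLieAlgebra {L M : Type*} [LieRing L] [LieRing M]
    [LieAlgebra ℝ L] [LieAlgebra ℝ M] : LieAlgebra ℝ (L × M) where
  lie_smul t x y := Prod.ext (lie_smul t x.1 y.1) (lie_smul t x.2 y.2)

/-- Direct sums of uniform Lie algebras: the union `B` of the images of the uniform bases
`B₁` of `n₁` and `B₂` of `n₂` in the direct sum `n₁ ⊕ n₂` is a uniform basis if and only if
`r₁ = r₂` and `s₁ = s₂`, in which case `n₁ ⊕ n₂` is uniform of type `(p₁+p₂, q₁+q₂, r₁)`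
with degree `s₁` with respect to `B`. -/
theorem uniform_direct_sum {p₁ q₁ r₁ s₁ p₂ q₂ r₂ s₂ : ℕ}
    (hp₁ : 0 < p₁) (hq₁ : 0 < q₁) (hr₁ : 0 < r₁) (hs₁ : 0 < s₁)
    (hp₂ : 0 < p₂) (hq₂ : 0 < q₂) (hr₂ : 0 < r₂) (hs₂ : 0 < s₂)
    {n₁ n₂ : Type*} [LieRing n₁] [LieAlgebra ℝ n₁] [LieRing n₂] [LieAlgebra ℝ n₂]
    (B₁ : Module.Basis (Fin q₁ ⊕ Fin p₁) ℝ n₁)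
    (hB₁ : IsUniform p₁ q₁ r₁ s₁ (fun i => B₁ (Sum.inl i)) (fun k => B₁ (Sum.inr k)))
    (B₂ : Module.Basis (Fin q₂ ⊕ Fin p₂) ℝ n₂)
    (hB₂ : IsUniform p₂ q₂ r₂ s₂ (fun i => B₂ (Sum.inl i)) (fun k => B₂ (Sum.inr k))) :
    let B : Module.Basis (Fin (q₁ + q₂) ⊕ Fin (p₁ + p₂)) ℝ (n₁ × n₂) :=
      (B₁.prod B₂).reindex
        ((Equiv.sumSumSumComm (Fin q₁) (Fin p₁) (Fin q₂) (Fin p₂)).trans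
          (Equiv.sumCongr finSumFinEquiv finSumFinEquiv))
    ((∃ r s, 0 < r ∧ 0 < s ∧
        IsUniform (p₁ + p₂) (q₁ + q₂) r s
          (fun i => B (Sum.inl i)) (fun k => B (Sum.inr k))) ↔ (r₁ = r₂ ∧ s₁ = s₂)) ∧
    ((r₁ = r₂ ∧ s₁ = s₂) →
      IsUniform (p₁ + p₂) (q₁ + q₂) r₁ s₁
        (fun i => B (Sum.inl i)) (fun k => B (Sum.inr k))) := by
  intro B
  obtain ⟨h1a, h1b, h1c, h1d, h1e, h1f⟩ := hB₁
  obtain ⟨h2a, h2b, h2c, h2d, h2e, h2f⟩ := hB₂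
  simp only at h1a h1b h1c h1d h1e h1f h2a h2b h2c h2d h2e h2f
  have hbr : ∀ x y : n₁ × n₂, ⁅x, y⁆ = (⁅x.1, y.1⁆, ⁅x.2, y.2⁆) := fun _ _ => rfl
  have hV1 : ∀ a : Fin q₁, B (Sum.inl (Fin.castAdd q₂ a)) = (B₁ (Sum.inl a), 0) := by
    intro a; simp [B, Module.Basis.prod_apply, Equiv.sumSumSumComm]
  have hV2 : ∀ b : Fin q₂, B (Sum.inl (Fin.natAdd q₁ b)) = (0, B₂ (Sum.inl b)) := by
    intro b; simp [B, Module.Basis.prod_apply, Equiv.sumSumSumComm]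
  have hZ1 : ∀ a : Fin p₁, B (Sum.inr (Fin.castAdd p₂ a)) = (B₁ (Sum.inr a), 0) := by
    intro a; simp [B, Module.Basis.prod_apply, Equiv.sumSumSumComm]
  have hZ2 : ∀ b : Fin p₂, B (Sum.inr (Fin.natAdd p₁ b)) = (0, B₂ (Sum.inr b)) := by
    intro b; simp [B, Module.Basis.prod_apply, Equiv.sumSumSumComm]
  have hcases : ∀ {m₁ m₂ : ℕ} (i : Fin (m₁ + m₂)),
      (∃ a, i = Fin.castAdd m₂ a) ∨ ∃ b, i = Fin.natAdd m₁ b := by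
    intro m₁ m₂ i
    exact Fin.addCases (fun a => Or.inl ⟨a, rfl⟩) (fun b => Or.inr ⟨b, rfl⟩) i
  have key11 : ∀ a a' : Fin q₁,
      ⁅B (Sum.inl (Fin.castAdd q₂ a)), B (Sum.inl (Fin.castAdd q₂ a'))⁆
        = (⁅B₁ (Sum.inl a), B₁ (Sum.inl a')⁆, (0 : n₂)) := by
    intro a a'; rw [hV1, hV1, hbr]; simp
  have key12 : ∀ (a : Fin q₁) (b : Fin q₂),
      ⁅B (Sum.inl (Fin.castAdd q₂ a)), B (Sum.inl (Fin.natAdd q₁ b))⁆ = 0 := by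
    intro a b; rw [hV1, hV2, hbr]; simp [Prod.ext_iff]
  have key21 : ∀ (b : Fin q₂) (a : Fin q₁),
      ⁅B (Sum.inl (Fin.natAdd q₁ b)), B (Sum.inl (Fin.castAdd q₂ a))⁆ = 0 := by
    intro b a; rw [hV2, hV1, hbr]; simp [Prod.ext_iff]
  have key22 : ∀ b b' : Fin q₂,
      ⁅B (Sum.inl (Fin.natAdd q₁ b)), B (Sum.inl (Fin.natAdd q₁ b'))⁆
        = ((0 : n₁), ⁅B₂ (Sum.inl b), B₂ (Sum.inl b')⁆) := by
    intro b b'; rw [hV2, hV2, hbr]; simp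
  have hinj1 : Function.Injective (Fin.castAdd (n := q₁) q₂) := Fin.castAdd_injective q₁ q₂
  have hinj2 : Function.Injective (Fin.natAdd q₁ : Fin q₂ → Fin (q₁ + q₂)) := by
    intro x y h
    have h' := congrArg Fin.val h
    simp only [Fin.natAdd, Fin.val_mk] at h'
    exact Fin.ext (by omega)
  -- counting lemmas
  have count1 : ∀ l : Fin p₁,
      {ij : Fin (q₁ + q₂) × Fin (q₁ + q₂) |
        ⁅B (Sum.inl ij.1), B (Sum.inl ij.2)⁆ = B (Sum.inr (Fin.castAdd p₂ l))}.ncard = r₁ := by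
    intro l
    have hset : {ij : Fin (q₁ + q₂) × Fin (q₁ + q₂) |
        ⁅B (Sum.inl ij.1), B (Sum.inl ij.2)⁆ = B (Sum.inr (Fin.castAdd p₂ l))}
        = (fun ab : Fin q₁ × Fin q₁ => (Fin.castAdd q₂ ab.1, Fin.castAdd q₂ ab.2)) ''
          {ab : Fin q₁ × Fin q₁ | ⁅B₁ (Sum.inl ab.1), B₁ (Sum.inl ab.2)⁆ = B₁ (Sum.inr l)} := by
      ext ij
      constructor
      · intro h
        obtain ⟨i, j⟩ := ij
        simp only [Set.mem_setOf_eq, hZ1] at h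
        rcases hcases i with ⟨a, rfl⟩ | ⟨b, rfl⟩
        · rcases hcases j with ⟨a', rfl⟩ | ⟨b', rfl⟩
          · rw [key11] at h
            exact ⟨(a, a'), congrArg Prod.fst h, rfl⟩
          · rw [key12] at h
            exact absurd (congrArg Prod.fst h).symm (B₁.ne_zero _)
        · rcases hcases j with ⟨a', rfl⟩ | ⟨b', rfl⟩
          · rw [key21] at h
            exact absurd (congrArg Prod.fst h).symm (B₁.ne_zero _)
          · rw [key22] at h
            exact absurd (congrArg Prod.fst h).symm (B₁.ne_zero _)
      · rintro ⟨⟨a, a'⟩, hmem, rfl⟩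
        simp only [Set.mem_setOf_eq] at hmem ⊢
        rw [key11, hZ1, hmem]
    rw [hset, Set.ncard_image_of_injective _
      (fun x y h => Prod.ext (hinj1 (congrArg Prod.fst h)) (hinj1 (congrArg Prod.snd h)))]
    exact h1e l
  have count2 : ∀ l : Fin p₂,
      {ij : Fin (q₁ + q₂) × Fin (q₁ + q₂) |
        ⁅B (Sum.inl ij.1), B (Sum.inl ij.2)⁆ = B (Sum.inr (Fin.natAdd p₁ l))}.ncard = r₂ := by
    intro l
    have hset : {ij : Fin (q₁ + q₂) × Fin (q₁ + q₂) |
        ⁅B (Sum.inl ij.1), B (Sum.inl ij.2)⁆ = B (Sum.inr (Fin.natAdd p₁ l))}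
        = (fun ab : Fin q₂ × Fin q₂ => (Fin.natAdd q₁ ab.1, Fin.natAdd q₁ ab.2)) ''
          {ab : Fin q₂ × Fin q₂ | ⁅B₂ (Sum.inl ab.1), B₂ (Sum.inl ab.2)⁆ = B₂ (Sum.inr l)} := by
      ext ij
      constructor
      · intro h
        obtain ⟨i, j⟩ := ij
        simp only [Set.mem_setOf_eq, hZ2] at h
        rcases hcases i with ⟨a, rfl⟩ | ⟨b, rfl⟩
        · rcases hcases j with ⟨a', rfl⟩ | ⟨b', rfl⟩
          · rw [key11] at h
            exact absurd (congrArg Prod.snd h).symm (B₂.ne_zero _)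
          · rw [key12] at h
            exact absurd (congrArg Prod.snd h).symm (B₂.ne_zero _)
        · rcases hcases j with ⟨a', rfl⟩ | ⟨b', rfl⟩
          · rw [key21] at h
            exact absurd (congrArg Prod.snd h).symm (B₂.ne_zero _)
          · rw [key22] at h
            exact ⟨(b, b'), congrArg Prod.snd h, rfl⟩
      · rintro ⟨⟨b, b'⟩, hmem, rfl⟩
        simp only [Set.mem_setOf_eq] at hmem ⊢
        rw [key22, hZ2, hmem]
    rw [hset, Set.ncard_image_of_injective _
      (fun x y h => Prod.ext (hinj2 (congrArg Prod.fst h)) (hinj2 (congrArg Prod.snd h)))]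
    exact h2e l
  have deg1 : ∀ j : Fin q₁,
      {i : Fin (q₁ + q₂) |
        ⁅B (Sum.inl i), B (Sum.inl (Fin.castAdd q₂ j))⁆ ≠ 0}.ncard = s₁ := by
    intro j
    have hset : {i : Fin (q₁ + q₂) | ⁅B (Sum.inl i), B (Sum.inl (Fin.castAdd q₂ j))⁆ ≠ 0}
        = Fin.castAdd q₂ '' {a : Fin q₁ | ⁅B₁ (Sum.inl a), B₁ (Sum.inl j)⁆ ≠ 0} := by
      ext i
      constructor
      · intro h
        simp only [Set.mem_setOf_eq] at h
        rcases hcases i with ⟨a, rfl⟩ | ⟨b, rfl⟩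
        · refine ⟨a, fun h0 => h ?_, rfl⟩
          rw [key11, h0]; rfl
        · exact absurd (key21 b j) h
      · rintro ⟨a, hmem, rfl⟩
        simp only [Set.mem_setOf_eq] at hmem ⊢
        rw [key11]
        exact fun h0 => hmem (congrArg Prod.fst h0)
    rw [hset, Set.ncard_image_of_injective _ hinj1]
    exact h1f j
  have deg2 : ∀ j : Fin q₂,
      {i : Fin (q₁ + q₂) |
        ⁅B (Sum.inl i), B (Sum.inl (Fin.natAdd q₁ j))⁆ ≠ 0}.ncard = s₂ := by
    intro j
    have hset : {i : Fin (q₁ + q₂) | ⁅B (Sum.inl i), B (Sum.inl (Fin.natAdd q₁ j))⁆ ≠ 0}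
        = Fin.natAdd q₁ '' {b : Fin q₂ | ⁅B₂ (Sum.inl b), B₂ (Sum.inl j)⁆ ≠ 0} := by
      ext i
      constructor
      · intro h
        simp only [Set.mem_setOf_eq] at h
        rcases hcases i with ⟨a, rfl⟩ | ⟨b, rfl⟩
        · exact absurd (key12 a j) h
        · refine ⟨b, fun h0 => h ?_, rfl⟩
          rw [key22, h0]; rfl
      · rintro ⟨b, hmem, rfl⟩
        simp only [Set.mem_setOf_eq] at hmem ⊢
        rw [key22]
        exact fun h0 => hmem (congrArg Prod.snd h0)
    rw [hset, Set.ncard_image_of_injective _ hinj2]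
    exact h2f j
  -- main construction
  have hmain : (r₁ = r₂ ∧ s₁ = s₂) →
      IsUniform (p₁ + p₂) (q₁ + q₂) r₁ s₁
        (fun i => B (Sum.inl i)) (fun k => B (Sum.inr k)) := by
    rintro ⟨hrr, hss⟩
    refine ⟨?_, ?_, ?_, ?_, ?_, ?_⟩
    · intro i j
      rcases hcases i with ⟨a, rfl⟩ | ⟨b, rfl⟩ <;> rcases hcases j with ⟨a', rfl⟩ | ⟨b', rfl⟩ <;>
        simp [hV1, hV2, hZ1, hZ2, hbr, Prod.ext_iff, h1a, h2a]
    · intro l m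
      rcases hcases l with ⟨a, rfl⟩ | ⟨b, rfl⟩ <;> rcases hcases m with ⟨a', rfl⟩ | ⟨b', rfl⟩ <;>
        simp [hZ1, hZ2, hbr, Prod.ext_iff, h1b, h2b]
    · intro i j
      rcases hcases i with ⟨a, rfl⟩ | ⟨b, rfl⟩
      · rcases hcases j with ⟨a', rfl⟩ | ⟨b', rfl⟩
        · rcases h1c a a' with h0 | ⟨k, hk | hk⟩
          · left; rw [key11, h0]; rfl
          · right; exact ⟨Fin.castAdd p₂ k, Or.inl (by beta_reduce; rw [key11, hZ1, hk])⟩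
          · right; refine ⟨Fin.castAdd p₂ k, Or.inr ?_⟩
            beta_reduce; rw [key11, hZ1, hk, Prod.neg_mk, neg_zero]
        · left; exact key12 a b'
      · rcases hcases j with ⟨a', rfl⟩ | ⟨b', rfl⟩
        · left; exact key21 b a'
        · rcases h2c b b' with h0 | ⟨k, hk | hk⟩
          · left; rw [key22, h0]; rfl
          · right; exact ⟨Fin.natAdd p₁ k, Or.inl (by beta_reduce; rw [key22, hZ2, hk])⟩
          · right; refine ⟨Fin.natAdd p₁ k, Or.inr ?_⟩
            beta_reduce; rw [key22, hZ2, hk, Prod.neg_mk, neg_zero]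
    · intro i j k hne heq
      rcases hcases i with ⟨a, rfl⟩ | ⟨b, rfl⟩
      · rcases hcases j with ⟨a', rfl⟩ | ⟨b', rfl⟩
        · rcases hcases k with ⟨a'', rfl⟩ | ⟨b'', rfl⟩
          · have hne' : ⁅B₁ (Sum.inl a), B₁ (Sum.inl a')⁆ ≠ 0 := by
              intro h0; exact hne (by rw [key11, h0]; rfl)
            have heq' : ⁅B₁ (Sum.inl a), B₁ (Sum.inl a')⁆ = ⁅B₁ (Sum.inl a), B₁ (Sum.inl a'')⁆ ∨
                ⁅B₁ (Sum.inl a), B₁ (Sum.inl a')⁆ = -⁅B₁ (Sum.inl a), B₁ (Sum.inl a'')⁆ := by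
              rcases heq with h | h
              · left; rw [key11, key11] at h; exact congrArg Prod.fst h
              · right; rw [key11, key11] at h; exact congrArg Prod.fst h
            exact congrArg _ (h1d a a' a'' hne' heq')
          · exfalso
            rw [key11, key12, neg_zero, or_self] at heq
            exact hne (by rw [key11, heq])
        · exact absurd (key12 a b') hne
      · rcases hcases j with ⟨a', rfl⟩ | ⟨b', rfl⟩
        · exact absurd (key21 b a') hne
        · rcases hcases k with ⟨a'', rfl⟩ | ⟨b'', rfl⟩
          · exfalso
            rw [key22, key21, neg_zero, or_self] at heq
            exact hne (by rw [key22, heq])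
          · have hne' : ⁅B₂ (Sum.inl b), B₂ (Sum.inl b')⁆ ≠ 0 := by
              intro h0; exact hne (by rw [key22, h0]; rfl)
            have heq' : ⁅B₂ (Sum.inl b), B₂ (Sum.inl b')⁆ = ⁅B₂ (Sum.inl b), B₂ (Sum.inl b'')⁆ ∨
                ⁅B₂ (Sum.inl b), B₂ (Sum.inl b')⁆ = -⁅B₂ (Sum.inl b), B₂ (Sum.inl b'')⁆ := by
              rcases heq with h | h
              · left; rw [key22, key22] at h; exact congrArg Prod.snd h
              · right; rw [key22, key22] at h; exact congrArg Prod.snd h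
            exact congrArg _ (h2d b b' b'' hne' heq')
    · intro l
      rcases hcases l with ⟨a, rfl⟩ | ⟨b, rfl⟩
      · exact count1 a
      · rw [hrr]; exact count2 b
    · intro j
      rcases hcases j with ⟨a, rfl⟩ | ⟨b, rfl⟩
      · exact deg1 a
      · rw [hss]; exact deg2 b
  refine ⟨⟨?_, fun h => ⟨r₁, s₁, hr₁, hs₁, hmain h⟩⟩, hmain⟩
  rintro ⟨r, s, hr, hs, ⟨-, -, -, -, hu4, hu5⟩⟩
  constructor
  · exact ((count1 ⟨0, hp₁⟩).symm.trans (hu4 (Fin.castAdd p₂ ⟨0, hp₁⟩))).trans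
      ((hu4 (Fin.natAdd p₁ ⟨0, hp₂⟩)).symm.trans (count2 ⟨0, hp₂⟩))
  · exact ((deg1 ⟨0, hq₁⟩).symm.trans (hu5 (Fin.castAdd q₂ ⟨0, hq₁⟩))).trans
      ((hu5 (Fin.natAdd q₁ ⟨0, hq₂⟩)).symm.trans (deg2 ⟨0, hq₂⟩))
end

section
/- Let n be a real Lie algebra with basis {v_1,…,v_{q₁}} ∪ {x_1,…,x_{q₂}} ∪ {z_1,…,z_p} such that: [v_i,x_j] = 0 for all i,j; the span of {v_1,…,v_{q₁}} ∪ {z_1,…,z_p} is a Lie subalgebra of n that is uniform of type (p,q₁,r₁) with degree s with respect to the uniform basis {v_1,…,v_{q₁}} ∪ {z_1,…,z_p}; and the span of {x_1,…,x_{q₂}} ∪ {z_1,…,z_p} is a Lie subalgebra of n that is uniform of type (p,q₂,r₂) with degree s with respect to the uniform basis {x_1,…,x_{q₂}} ∪ {z_1,…,z_p}. Then n is uniform of type (p, q₁+q₂, r₁+r₂) with degree s with respect to the uniform basis {v_1,…,v_{q₁}} ∪ {x_1,…,x_{q₂}} ∪ {z_1,…,z_p}. -/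
/-- Concatenation of uniform Lie algebras: if `n` has basis
`{v_1,…,v_{q₁}} ∪ {x_1,…,x_{q₂}} ∪ {z_1,…,z_p}` with `⁅v i, x j⁆ = 0` for all `i, j`,
the span of the `v`'s and `z`'s is a subalgebra, uniform of type `(p,q₁,r₁)` with degree `s`
with respect to `{v} ∪ {z}`, and the span of the `x`'s and `z`'s is a subalgebra, uniform of
type `(p,q₂,r₂)` with degree `s` with respect to `{x} ∪ {z}`, then `n` is uniform of type
`(p, q₁+q₂, r₁+r₂)` with degree `s` with respect to `{v} ∪ {x} ∪ {z}`. -/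
theorem uniform_concatenation {p q₁ q₂ r₁ r₂ s : ℕ}
    (hp : 0 < p) (hq₁ : 0 < q₁) (hq₂ : 0 < q₂) (hr₁ : 0 < r₁) (hr₂ : 0 < r₂) (hs : 0 < s)
    {n : Type*} [LieRing n] [LieAlgebra ℝ n]
    (B : Module.Basis (Fin (q₁ + q₂) ⊕ Fin p) ℝ n)
    (v : Fin q₁ → n) (x : Fin q₂ → n) (z : Fin p → n)
    (hv : ∀ i, v i = B (Sum.inl (Fin.castAdd q₂ i)))
    (hx : ∀ j, x j = B (Sum.inl (Fin.natAdd q₁ j)))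
    (hz : ∀ k, z k = B (Sum.inr k))
    (hvx : ∀ i j, ⁅v i, x j⁆ = 0)
    (hsub₁ : ∀ a ∈ Submodule.span ℝ (Set.range v ∪ Set.range z),
      ∀ b ∈ Submodule.span ℝ (Set.range v ∪ Set.range z),
        ⁅a, b⁆ ∈ Submodule.span ℝ (Set.range v ∪ Set.range z))
    (h₁ : IsUniform p q₁ r₁ s v z)
    (hsub₂ : ∀ a ∈ Submodule.span ℝ (Set.range x ∪ Set.range z),
      ∀ b ∈ Submodule.span ℝ (Set.range x ∪ Set.range z),
        ⁅a, b⁆ ∈ Submodule.span ℝ (Set.range x ∪ Set.range z))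
    (h₂ : IsUniform p q₂ r₂ s x z) :
    IsUniform p (q₁ + q₂) (r₁ + r₂) s (fun i => B (Sum.inl i)) (fun k => B (Sum.inr k)) := by
  obtain ⟨h1z, h1zz, h1b, h1u, h1r, h1s⟩ := h₁
  obtain ⟨h2z, h2zz, h2b, h2u, h2r, h2s⟩ := h₂
  set w : Fin (q₁ + q₂) → n := fun i => B (Sum.inl i) with hwdef
  set Z : Fin p → n := fun k => B (Sum.inr k) with hZdef
  have hzZ : ∀ k, z k = Z k := fun k => hz k
  have hwv : ∀ i, w (Fin.castAdd q₂ i) = v i := fun i => (hv i).symm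
  have hwx : ∀ j, w (Fin.natAdd q₁ j) = x j := fun j => (hx j).symm
  have hxv : ∀ i j, ⁅x j, v i⁆ = 0 := by
    intro i j
    rw [← lie_skew, hvx, neg_zero]
  have hZ0 : ∀ k, Z k ≠ 0 := fun k => B.ne_zero _
  have hcase : ∀ i : Fin (q₁ + q₂), (∃ a, i = Fin.castAdd q₂ a) ∨ (∃ b, i = Fin.natAdd q₁ b) :=
    fun i => Fin.addCases (fun a => Or.inl ⟨a, rfl⟩) (fun b => Or.inr ⟨b, rfl⟩) i
  have hcinj : Function.Injective (Fin.castAdd q₂ : Fin q₁ → Fin (q₁ + q₂)) := by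
    intro a b h
    have := congrArg Fin.val h
    simp only [Fin.coe_castAdd] at this
    exact Fin.ext this
  have hninj : Function.Injective (Fin.natAdd q₁ : Fin q₂ → Fin (q₁ + q₂)) := by
    intro a b h
    have := congrArg Fin.val h
    simp only [Fin.coe_natAdd] at this
    exact Fin.ext (by omega)
  have hne : ∀ (a : Fin q₁) (b : Fin q₂), Fin.castAdd q₂ a ≠ Fin.natAdd q₁ b := by
    intro a b h
    have := congrArg Fin.val h
    simp only [Fin.coe_castAdd, Fin.coe_natAdd] at this
    omega
  refine ⟨?_, ?_, ?_, ?_, ?_, ?_⟩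
  · -- (1)
    intro i k
    rcases hcase i with ⟨a, rfl⟩ | ⟨b, rfl⟩
    · show ⁅w _, Z k⁆ = 0
      rw [hwv, ← hzZ]; exact h1z a k
    · show ⁅w _, Z k⁆ = 0
      rw [hwx, ← hzZ]; exact h2z b k
  · -- (2)
    intro l m
    show ⁅Z l, Z m⁆ = 0
    rw [← hzZ, ← hzZ]; exact h1zz l m
  · -- (3)
    intro i j
    show ⁅w i, w j⁆ = 0 ∨ ∃ k, ⁅w i, w j⁆ = Z k ∨ ⁅w i, w j⁆ = - Z k
    rcases hcase i with ⟨a, rfl⟩ | ⟨a, rfl⟩ <;> rcases hcase j with ⟨b, rfl⟩ | ⟨b, rfl⟩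
    · rw [hwv, hwv]
      rcases h1b a b with h | ⟨k, h | h⟩
      · exact Or.inl h
      · exact Or.inr ⟨k, Or.inl (by rw [h, hzZ])⟩
      · exact Or.inr ⟨k, Or.inr (by rw [h, hzZ])⟩
    · rw [hwv, hwx]; exact Or.inl (hvx a b)
    · rw [hwx, hwv]; exact Or.inl (hxv b a)
    · rw [hwx, hwx]
      rcases h2b a b with h | ⟨k, h | h⟩
      · exact Or.inl h
      · exact Or.inr ⟨k, Or.inl (by rw [h, hzZ])⟩
      · exact Or.inr ⟨k, Or.inr (by rw [h, hzZ])⟩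
  · -- (4)
    intro i j k hjk h
    change ⁅w i, w j⁆ ≠ 0 at hjk
    change ⁅w i, w j⁆ = ⁅w i, w k⁆ ∨ ⁅w i, w j⁆ = - ⁅w i, w k⁆ at h
    rcases hcase i with ⟨a, rfl⟩ | ⟨a, rfl⟩
    · rcases hcase j with ⟨b, rfl⟩ | ⟨b, rfl⟩
      · rcases hcase k with ⟨c, rfl⟩ | ⟨c, rfl⟩
        · simp only [hwv] at h hjk
          exact congrArg _ (h1u a b c hjk h)
        · rw [hwv, hwv] at hjk h
          rw [hwx, hvx] at h
          rcases h with h | h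
          · exact absurd h hjk
          · rw [neg_zero] at h; exact absurd h hjk
      · rw [hwv, hwx, hvx] at hjk
        exact absurd rfl hjk
    · rcases hcase j with ⟨b, rfl⟩ | ⟨b, rfl⟩
      · rw [hwx, hwv, hxv] at hjk
        exact absurd rfl hjk
      · rcases hcase k with ⟨c, rfl⟩ | ⟨c, rfl⟩
        · rw [hwx, hwx] at hjk h
          rw [hwv, hxv] at h
          rcases h with h | h
          · exact absurd h hjk
          · rw [neg_zero] at h; exact absurd h hjk
        · simp only [hwx] at h hjk
          exact congrArg _ (h2u a b c hjk h)
  · -- (5): counting pairs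
    intro l
    have hset : {ij : Fin (q₁ + q₂) × Fin (q₁ + q₂) | ⁅w ij.1, w ij.2⁆ = Z l}
        = (Prod.map (Fin.castAdd q₂) (Fin.castAdd q₂)) ''
            {ij : Fin q₁ × Fin q₁ | ⁅v ij.1, v ij.2⁆ = z l}
          ∪ (Prod.map (Fin.natAdd q₁) (Fin.natAdd q₁)) ''
            {ij : Fin q₂ × Fin q₂ | ⁅x ij.1, x ij.2⁆ = z l} := by
      ext ⟨i, j⟩
      simp only [Set.mem_setOf_eq, Set.mem_union, Set.mem_image, Prod.exists, Prod.map_apply]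
      constructor
      · intro h
        rcases hcase i with ⟨a, rfl⟩ | ⟨a, rfl⟩ <;> rcases hcase j with ⟨b, rfl⟩ | ⟨b, rfl⟩
        · exact Or.inl ⟨a, b, by rw [← hwv a, ← hwv b, h, hzZ], rfl⟩
        · rw [hwv, hwx, hvx] at h
          exact absurd h.symm (hZ0 l)
        · rw [hwx, hwv, hxv] at h
          exact absurd h.symm (hZ0 l)
        · exact Or.inr ⟨a, b, by rw [← hwx a, ← hwx b, h, hzZ], rfl⟩
      · rintro (⟨a, b, hab, heq⟩ | ⟨a, b, hab, heq⟩) <;>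
          injection heq with e1 e2 <;> subst e1 <;> subst e2
        · rw [hwv, hwv, hab, hzZ]
        · rw [hwx, hwx, hab, hzZ]
    have hdisj : Disjoint
        ((Prod.map (Fin.castAdd q₂) (Fin.castAdd q₂)) ''
          {ij : Fin q₁ × Fin q₁ | ⁅v ij.1, v ij.2⁆ = z l})
        ((Prod.map (Fin.natAdd q₁) (Fin.natAdd q₁)) ''
          {ij : Fin q₂ × Fin q₂ | ⁅x ij.1, x ij.2⁆ = z l}) := by
      rw [Set.disjoint_left]
      rintro ⟨i, j⟩ ⟨⟨a, b⟩, -, heq1⟩ ⟨⟨c, d⟩, -, heq2⟩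
      rw [← heq2] at heq1
      simp only [Prod.map_apply, Prod.mk.injEq] at heq1
      exact hne a c heq1.1
    show {ij : Fin (q₁ + q₂) × Fin (q₁ + q₂) | ⁅w ij.1, w ij.2⁆ = Z l}.ncard = r₁ + r₂
    rw [hset, Set.ncard_union_eq hdisj (Set.toFinite _) (Set.toFinite _),
      Set.ncard_image_of_injective _ (hcinj.prodMap hcinj),
      Set.ncard_image_of_injective _ (hninj.prodMap hninj), h1r l, h2r l]
  · -- (6): degrees
    intro j
    rcases hcase j with ⟨b, rfl⟩ | ⟨b, rfl⟩
    · have hset : {i : Fin (q₁ + q₂) | ⁅w i, w (Fin.castAdd q₂ b)⁆ ≠ 0}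
          = (Fin.castAdd q₂) '' {i : Fin q₁ | ⁅v i, v b⁆ ≠ 0} := by
        ext i
        simp only [Set.mem_setOf_eq, Set.mem_image]
        constructor
        · intro h
          rcases hcase i with ⟨a, rfl⟩ | ⟨a, rfl⟩
          · exact ⟨a, by rwa [hwv, hwv] at h, rfl⟩
          · rw [hwx, hwv, hxv] at h
            exact absurd rfl h
        · rintro ⟨a, ha, rfl⟩
          rwa [hwv, hwv]
      show {i : Fin (q₁ + q₂) | ⁅w i, w (Fin.castAdd q₂ b)⁆ ≠ 0}.ncard = s
      rw [hset, Set.ncard_image_of_injective _ hcinj]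
      exact h1s b
    · have hset : {i : Fin (q₁ + q₂) | ⁅w i, w (Fin.natAdd q₁ b)⁆ ≠ 0}
          = (Fin.natAdd q₁) '' {i : Fin q₂ | ⁅x i, x b⁆ ≠ 0} := by
        ext i
        simp only [Set.mem_setOf_eq, Set.mem_image]
        constructor
        · intro h
          rcases hcase i with ⟨a, rfl⟩ | ⟨a, rfl⟩
          · rw [hwv, hwx, hvx] at h
            exact absurd rfl h
          · exact ⟨a, by rwa [hwx, hwx] at h, rfl⟩
        · rintro ⟨a, ha, rfl⟩
          rwa [hwx, hwx]
      show {i : Fin (q₁ + q₂) | ⁅w i, w (Fin.natAdd q₁ b)⁆ ≠ 0}.ncard = s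
      rw [hset, Set.ncard_image_of_injective _ hninj]
      exact h2s b
end

section
/- Let n be a real Lie algebra that is uniform of type (1,q,r) with degree s with respect to a uniform basis {v_1,…,v_q} ∪ {z}. Then q = 2r, s = 1, and n is isomorphic to the (2r+1)-dimensional Heisenberg Lie algebra; that is, there exists a basis {x_1,…,x_r} ∪ {y_1,…,y_r} ∪ {z'} of n such that [x_i, y_i] = z' for all i = 1,…,r, and all other Lie brackets of pairs of these basis vectors are zero. -/
/-- A uniform Lie algebra of type `(1,q,r)` satisfies `q = 2r` and `s = 1`, and is
isomorphic to the `(2r+1)`-dimensional Heisenberg algebra: it has a basis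
`{x_1,…,x_r} ∪ {y_1,…,y_r} ∪ {z'}` with `⁅x i, y i⁆ = z'` and all other brackets of pairs
of basis vectors zero. -/
theorem uniform_p_eq_one_heisenberg {q r s : ℕ}
    (hq : 0 < q) (hr : 0 < r) (hs : 0 < s)
    {n : Type*} [LieRing n] [LieAlgebra ℝ n]
    (B : Module.Basis (Fin q ⊕ Fin 1) ℝ n)
    (hB : IsUniform 1 q r s (fun i => B (Sum.inl i)) (fun k => B (Sum.inr k))) :
    q = 2 * r ∧ s = 1 ∧
    ∃ (x y : Fin r → n) (z' : n),
      (∃ C : Module.Basis ((Fin r ⊕ Fin r) ⊕ Fin 1) ℝ n,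
        (∀ i, C (Sum.inl (Sum.inl i)) = x i) ∧
        (∀ i, C (Sum.inl (Sum.inr i)) = y i) ∧
        C (Sum.inr 0) = z') ∧
      (∀ i, ⁅x i, y i⁆ = z') ∧
      (∀ i j, ⁅x i, x j⁆ = 0) ∧
      (∀ i j, ⁅y i, y j⁆ = 0) ∧
      (∀ i j, i ≠ j → ⁅x i, y j⁆ = 0) ∧
      (∀ i, ⁅x i, z'⁆ = 0) ∧
      (∀ i, ⁅y i, z'⁆ = 0) := by
  classical
  set v : Fin q → n := fun i => B (Sum.inl i) with hv
  set z : Fin 1 → n := fun k => B (Sum.inr k) with hzdef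
  obtain ⟨h1, h2, h3, h4, h5, h6⟩ := hB
  have hz : z 0 ≠ 0 := B.ne_zero _
  -- every bracket is 0, z 0, or -z 0
  have hval : ∀ i j, ⁅v i, v j⁆ = 0 ∨ ⁅v i, v j⁆ = z 0 ∨ ⁅v i, v j⁆ = - z 0 := by
    intro i j
    rcases h3 i j with h | ⟨k, hk⟩
    · exact Or.inl h
    · rw [show k = 0 from Subsingleton.elim k 0] at hk
      exact Or.inr hk
  -- per first index, at most one nonzero partner
  have huniq : ∀ i j k, ⁅v i, v j⁆ ≠ 0 → ⁅v i, v k⁆ ≠ 0 → j = k := by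
    intro i j k hj hk
    apply h4 i j k hj
    rcases hval i j with h | h | h <;> rcases hval i k with h' | h' | h' <;>
      simp only [h, h', ne_eq, not_true_eq_false, neg_neg, true_or, or_true] at hj hk ⊢
  -- the set of ordered pairs with bracket z 0
  set S : Set (Fin q × Fin q) := {ij : Fin q × Fin q | ⁅v ij.1, v ij.2⁆ = z 0} with hS
  haveI : Fintype ↥S := Fintype.ofFinite _
  have hScard : Fintype.card ↥S = r := by
    have h := h5 0
    rwa [Set.ncard_eq_toFinset_card', Set.toFinset_card] at h
  set f : Fin r ≃ ↥S := (Fintype.equivFinOfCardEq hScard).symm with hf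
  set a : Fin r → Fin q := fun i => (f i : Fin q × Fin q).1 with ha
  set b : Fin r → Fin q := fun i => (f i : Fin q × Fin q).2 with hb
  have hmem : ∀ i, ⁅v (a i), v (b i)⁆ = z 0 := fun i => (f i).2
  have hmem' : ∀ i, ⁅v (b i), v (a i)⁆ = - z 0 := by
    intro i
    rw [← lie_skew, hmem i]
  have hmemne : ∀ i, ⁅v (a i), v (b i)⁆ ≠ 0 := fun i => by rw [hmem i]; exact hz
  have hmemne' : ∀ i, ⁅v (b i), v (a i)⁆ ≠ 0 := fun i => by
    rw [hmem' i]; exact neg_ne_zero.mpr hz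
  have hfinj : ∀ i i', a i = a i' → b i = b i' → i = i' := by
    intro i i' hai hbi
    exact f.injective (Subtype.ext (Prod.ext hai hbi))
  have hainj : Function.Injective a := by
    intro i i' hai
    refine hfinj i i' hai (huniq (a i) (b i) (b i') (hmemne i) ?_)
    rw [hai]; exact hmemne i'
  have hbinj : Function.Injective b := by
    intro i i' hbi
    refine hfinj i i' (huniq (b i) (a i) (a i') (hmemne' i) ?_) hbi
    rw [hbi]; exact hmemne' i'
  have hzz : z 0 = - z 0 → False := by
    intro hw
    have h2 : (2 : ℝ) • z 0 = 0 := by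
      rw [two_smul]
      rw [eq_neg_iff_add_eq_zero] at hw
      exact hw
    rcases smul_eq_zero.mp h2 with h | h
    · norm_num at h
    · exact hz h
  have hab : ∀ i j, a i ≠ b j := by
    intro i j hij
    have h1' : ⁅v (a i), v (a j)⁆ = - z 0 := by rw [hij]; exact hmem' j
    have h1ne : ⁅v (a i), v (a j)⁆ ≠ 0 := by
      rw [h1']; exact neg_ne_zero.mpr hz
    have hba : b i = a j := huniq (a i) (b i) (a j) (hmemne i) h1ne
    have e1 : ⁅v (b j), v (a j)⁆ = z 0 := by
      rw [← hij, ← hba]; exact hmem i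
    exact hzz (e1.symm.trans (hmem' j))
  set g : Fin r ⊕ Fin r → Fin q := Sum.elim a b with hg
  have hginj : Function.Injective g := by
    intro u u' huu
    rcases u with i | i <;> rcases u' with i' | i' <;> simp only [hg, Sum.elim_inl, Sum.elim_inr] at huu
    · rw [hainj huu]
    · exact absurd huu (hab i i')
    · exact absurd huu.symm (hab i' i)
    · rw [hbinj huu]
  have hgsurj : Function.Surjective g := by
    intro j
    have hnon : {i : Fin q | ⁅v i, v j⁆ ≠ 0}.Nonempty := by
      apply Set.nonempty_of_ncard_ne_zero
      rw [h6 j]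
      exact hs.ne'
    obtain ⟨i, hi⟩ := hnon
    rcases hval i j with h | h | h
    · exact absurd h hi
    · refine ⟨Sum.inr (f.symm ⟨(i, j), h⟩), ?_⟩
      simp only [hg, Sum.elim_inr, hb, Equiv.apply_symm_apply]
    · have h' : ⁅v j, v i⁆ = z 0 := by rw [← lie_skew, h, neg_neg]
      refine ⟨Sum.inl (f.symm ⟨(j, i), h'⟩), ?_⟩
      simp only [hg, Sum.elim_inl, ha, Equiv.apply_symm_apply]
  have hgbij : Function.Bijective g := ⟨hginj, hgsurj⟩
  set eg : (Fin r ⊕ Fin r) ≃ Fin q := Equiv.ofBijective g hgbij with heg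
  have hq2r : q = 2 * r := by
    have hc := Fintype.card_congr eg
    simp only [Fintype.card_sum, Fintype.card_fin] at hc
    omega
  have hs1 : s = 1 := by
    set j0 : Fin q := ⟨0, hq⟩ with hj0
    have hnon : {i : Fin q | ⁅v i, v j0⁆ ≠ 0}.Nonempty := by
      apply Set.nonempty_of_ncard_ne_zero
      rw [h6 j0]
      exact hs.ne'
    obtain ⟨i0, hi0⟩ := hnon
    have hsingle : {i : Fin q | ⁅v i, v j0⁆ ≠ 0} = {i0} := by
      ext t
      simp only [Set.mem_setOf_eq, Set.mem_singleton_iff]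
      constructor
      · intro ht
        refine huniq j0 t i0 ?_ ?_
        · rw [← lie_skew]; exact neg_ne_zero.mpr ht
        · rw [← lie_skew]; exact neg_ne_zero.mpr hi0
      · rintro rfl; exact hi0
    rw [← h6 j0, hsingle, Set.ncard_singleton]
  refine ⟨hq2r, hs1, fun i => v (a i), fun i => v (b i), z 0, ?_, hmem, ?_, ?_, ?_, ?_, ?_⟩
  · refine ⟨B.reindex (Equiv.sumCongr eg.symm (Equiv.refl (Fin 1))), ?_, ?_, ?_⟩
    · intro i
      simp only [Module.Basis.reindex_apply, Equiv.sumCongr_symm, Equiv.symm_symm, Equiv.refl_symm,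
        Equiv.sumCongr_apply, Sum.map_inl, Equiv.ofBijective_apply, hg, Sum.elim_inl,
        Equiv.refl_apply]
      rfl
    · intro i
      simp only [Module.Basis.reindex_apply, Equiv.sumCongr_symm, Equiv.symm_symm, Equiv.refl_symm,
        Equiv.sumCongr_apply, Sum.map_inr, Equiv.ofBijective_apply, hg, Sum.elim_inr,
        Equiv.refl_apply]
      rfl
    · simp only [Module.Basis.reindex_apply, Equiv.sumCongr_symm, Equiv.symm_symm, Equiv.refl_symm,
        Equiv.sumCongr_apply, Sum.map_inr, Equiv.refl_apply]
      rfl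
  · intro i j
    by_contra h
    exact hab j i (huniq (a i) (a j) (b i) h (hmemne i))
  · intro i j
    by_contra h
    exact hab i j (huniq (b i) (b j) (a i) h (hmemne' i)).symm
  · intro i j hij
    by_contra h
    exact hij (hbinj (huniq (a i) (b j) (b i) h (hmemne i))).symm
  · intro i
    exact h1 (a i) 0
  · intro i
    exact h1 (b i) 0
end
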